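/- arXiv:2301.00506 — 4 statements merged into one kernel-verified Lean document; each statement's English description precedes it below -/
import Mathlib

section
/- Let $d \in \mathbb{N}$, $1 < q_1, q_2 \le \infty$, $0 < r_1, r_2 \le \infty$, $s_1, s_2 \in \mathbb{R}$, with $r_i = \infty$ whenever $q_i = \infty$. Suppose there is a constant $C > 0$ with $\|e^{t\Delta} f\|_{L^{q_2,r_2}_{s_2}} \le C t^{-\frac{d}{2}(\frac{1}{q_1}-\frac{1}{q_2}) - \frac{s_1-s_2}{2}} \|f\|_{L^{q_1,r_1}_{s_1}}$ for all $t > 0$ and $f \in L^{q_1,r_1}_{s_1}(\mathbb{R}^d)$. Then $s_2 \le s_1$. -/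
open MeasureTheory Set Filter ENNReal

noncomputable section

/-- Distribution function of `f` with respect to Lebesgue measure. -/
def distFn {d : ℕ} (f : EuclideanSpace ℝ (Fin d) → ℝ) (lam : ℝ) : ℝ≥0∞ :=
  volume {x | lam < |f x|}

/-- Decreasing rearrangement of `f`. -/
def rearr {d : ℕ} (f : EuclideanSpace ℝ (Fin d) → ℝ) (t : ℝ) : ℝ :=
  sInf {lam : ℝ | 0 < lam ∧ distFn f lam ≤ ENNReal.ofReal t}

/-- Lorentz quasi-norm `‖f‖_{L^{q,r}}` (with `q, r ∈ (0,∞]`). -/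
def lorentzNorm {d : ℕ} (q r : ℝ≥0∞) (f : EuclideanSpace ℝ (Fin d) → ℝ) : ℝ≥0∞ :=
  if r = ⊤ then ⨆ t ∈ Set.Ioi (0:ℝ), ENNReal.ofReal (t ^ q.toReal⁻¹ * rearr f t)
  else (∫⁻ t in Set.Ioi (0:ℝ),
      ENNReal.ofReal ((t ^ q.toReal⁻¹ * rearr f t) ^ r.toReal / t)) ^ r.toReal⁻¹

/-- Weighted Lorentz quasi-norm `‖|x|^s f‖_{L^{q,r}}`. -/
def wLorentz {d : ℕ} (q r : ℝ≥0∞) (s : ℝ) (f : EuclideanSpace ℝ (Fin d) → ℝ) : ℝ≥0∞ :=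
  lorentzNorm q r fun x => ‖x‖ ^ s * f x

/-- Gaussian heat kernel `G_t`. -/
def gauss (d : ℕ) (t : ℝ) (x : EuclideanSpace ℝ (Fin d)) : ℝ :=
  (4 * Real.pi * t) ^ (-(d:ℝ)/2) * Real.exp (-‖x‖^2 / (4*t))

/-- Heat semigroup `e^{tΔ} f = G_t * f`. -/
def heat {d : ℕ} (t : ℝ) (f : EuclideanSpace ℝ (Fin d) → ℝ)
    (x : EuclideanSpace ℝ (Fin d)) : ℝ :=
  ∫ y, gauss d t (x - y) * f y

end


open Metric

section RearrLemmas
variable {d : ℕ} {g : EuclideanSpace ℝ (Fin d) → ℝ}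

lemma stmt5_rearr_nonneg (g : EuclideanSpace ℝ (Fin d) → ℝ) (t : ℝ) : 0 ≤ rearr g t :=
  Real.sInf_nonneg fun _ hx => hx.1.le

lemma stmt5_rearr_le_of_bound {a : ℝ} (t : ℝ) (ha : 0 < a) (hg : ∀ x, |g x| ≤ a) :
    rearr g t ≤ a := by
  apply csInf_le ⟨0, fun lam hlam => hlam.1.le⟩
  refine ⟨ha, ?_⟩
  have h : {x | a < |g x|} = (∅ : Set (EuclideanSpace ℝ (Fin d))) :=
    eq_empty_of_forall_notMem fun x hx => absurd (hg x) (not_le.2 hx)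
  simp [distFn, h]

lemma stmt5_rearr_eq_zero {m t : ℝ} (h : volume {x | g x ≠ 0} ≤ ENNReal.ofReal m)
    (ht : m ≤ t) : rearr g t = 0 := by
  have hset : {lam : ℝ | 0 < lam ∧ distFn g lam ≤ ENNReal.ofReal t} = Ioi 0 := by
    ext lam
    simp only [mem_setOf_eq, mem_Ioi, and_iff_left_iff_imp]
    intro hlam
    refine le_trans (le_trans (measure_mono ?_) h) (ENNReal.ofReal_le_ofReal ht)
    intro x hx
    simp only [mem_setOf_eq] at hx ⊢
    intro h0
    rw [h0] at hx
    simp only [abs_zero] at hx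
    linarith
  rw [rearr, hset, csInf_Ioi]

lemma stmt5_le_rearr {c t : ℝ} {A : Set (EuclideanSpace ℝ (Fin d))}
    (hA : ENNReal.ofReal t < volume A) (hsub : ∀ x ∈ A, c ≤ |g x|)
    (hne : ∃ lam, 0 < lam ∧ distFn g lam ≤ ENNReal.ofReal t) : c ≤ rearr g t := by
  obtain ⟨lam₀, hlam₀⟩ := hne
  refine le_csInf ⟨lam₀, hlam₀⟩ ?_
  rintro lam ⟨hl, hdl⟩
  by_contra hcl
  push_neg at hcl
  have h1 : volume A ≤ distFn g lam :=
    measure_mono fun x hx => lt_of_lt_of_le hcl (hsub x hx)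
  exact absurd (le_trans h1 hdl) (not_le.2 hA)

end RearrLemmas

noncomputable section KDefs
def stmt5_Kup (q r : ℝ≥0∞) (m : ℝ) : ℝ≥0∞ :=
  if r = ⊤ then ENNReal.ofReal (m ^ q.toReal⁻¹)
  else (∫⁻ t in Set.Ioo (0:ℝ) m,
      ENNReal.ofReal (t ^ (q.toReal⁻¹ * r.toReal - 1))) ^ r.toReal⁻¹

def stmt5_Klo (q r : ℝ≥0∞) (m : ℝ) : ℝ≥0∞ :=
  if r = ⊤ then ENNReal.ofReal ((m/2) ^ q.toReal⁻¹)
  else (ENNReal.ofReal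
      (min ((m/2) ^ (q.toReal⁻¹ * r.toReal - 1)) (m ^ (q.toReal⁻¹ * r.toReal - 1)))
      * ENNReal.ofReal (m/2)) ^ r.toReal⁻¹

end KDefs

section NormLemmas
variable {d : ℕ} {g : EuclideanSpace ℝ (Fin d) → ℝ} {q r : ℝ≥0∞} {m : ℝ}

lemma stmt5_Kup_lt_top (hq : 1 < q) (hr : 0 < r) (hinf : q = ⊤ → r = ⊤) (hm : 0 < m) :
    stmt5_Kup q r m < ⊤ := by
  rw [stmt5_Kup]
  split_ifs with h
  · exact ofReal_lt_top
  · have hq' : q ≠ ⊤ := fun hqt => h (hinf hqt)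
    have he : 0 < q.toReal⁻¹ := by
      have : 0 < q.toReal := ENNReal.toReal_pos (by exact (lt_of_le_of_lt zero_le_one hq).ne') hq'
      positivity
    have hrr : 0 < r.toReal := ENNReal.toReal_pos hr.ne' h
    have hexp : (-1:ℝ) < q.toReal⁻¹ * r.toReal - 1 := by nlinarith [mul_pos he hrr]
    have hint : IntegrableOn (fun t : ℝ => t ^ (q.toReal⁻¹ * r.toReal - 1)) (Ioo 0 m) :=
      (intervalIntegral.integrableOn_Ioo_rpow_iff hm).2 hexp
    have hfin : (∫⁻ t in Ioo (0:ℝ) m,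
        ENNReal.ofReal (t ^ (q.toReal⁻¹ * r.toReal - 1))) < ⊤ := by
      refine lt_of_le_of_lt (lintegral_mono fun t => ?_) hint.2
      calc ENNReal.ofReal (t ^ (q.toReal⁻¹ * r.toReal - 1))
          ≤ ENNReal.ofReal ‖t ^ (q.toReal⁻¹ * r.toReal - 1)‖ :=
            ENNReal.ofReal_le_ofReal (le_abs_self _)
        _ = ‖t ^ (q.toReal⁻¹ * r.toReal - 1)‖ₑ := ofReal_norm _
    exact ENNReal.rpow_lt_top_of_nonneg (by positivity) hfin.ne

lemma stmt5_Klo_pos (hm : 0 < m) : 0 < stmt5_Klo q r m := by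
  rw [stmt5_Klo]
  split_ifs with h
  · exact ENNReal.ofReal_pos.2 (Real.rpow_pos_of_pos (by linarith) _)
  · refine ENNReal.rpow_pos (ENNReal.mul_pos ?_ ?_) ?_
    · exact (ENNReal.ofReal_pos.2 (lt_min (Real.rpow_pos_of_pos (by linarith) _)
        (Real.rpow_pos_of_pos hm _))).ne'
    · exact (ENNReal.ofReal_pos.2 (by linarith : (0:ℝ) < m/2)).ne'
    · exact (ENNReal.mul_lt_top ofReal_lt_top ofReal_lt_top).ne

lemma stmt5_Klo_ne_top (hm : 0 < m) : stmt5_Klo q r m ≠ ⊤ := by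
  rw [stmt5_Klo]
  split_ifs with h
  · exact ofReal_ne_top
  · exact ENNReal.rpow_ne_top_of_nonneg (by positivity)
      (ENNReal.mul_lt_top ofReal_lt_top ofReal_lt_top).ne

lemma stmt5_lorentzNorm_le {a : ℝ} (hq : 1 < q) (hr : 0 < r)
    (hinf : q = ⊤ → r = ⊤) (ha : 0 < a) (hm : 0 < m)
    (hbd : ∀ t : ℝ, rearr g t ≤ a) (hz : ∀ t : ℝ, m ≤ t → rearr g t = 0) :
    lorentzNorm q r g ≤ ENNReal.ofReal a * stmt5_Kup q r m := by
  have he0 : (0:ℝ) ≤ q.toReal⁻¹ := by positivity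
  rw [lorentzNorm, stmt5_Kup]
  split_ifs with hrt
  · refine iSup₂_le fun t ht => ?_
    rw [mem_Ioi] at ht
    rcases le_or_gt m t with h | h
    · rw [hz t h, mul_zero, ofReal_zero]
      exact zero_le
    · rw [← ENNReal.ofReal_mul ha.le]
      refine ENNReal.ofReal_le_ofReal ?_
      calc t ^ q.toReal⁻¹ * rearr g t
          ≤ m ^ q.toReal⁻¹ * a := mul_le_mul
            (Real.rpow_le_rpow ht.le h.le he0) (hbd t)
            (stmt5_rearr_nonneg g t) (Real.rpow_nonneg hm.le _)
        _ = a * m ^ q.toReal⁻¹ := mul_comm _ _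
  · have hq' : q ≠ ⊤ := fun hh => hrt (hinf hh)
    have hrr : 0 < r.toReal := ENNReal.toReal_pos hr.ne' hrt
    set e := q.toReal⁻¹ with hedef
    set r' := r.toReal with hrdef
    have key : (∫⁻ t in Ioi (0:ℝ), ENNReal.ofReal ((t ^ e * rearr g t) ^ r' / t))
        ≤ ENNReal.ofReal (a ^ r') *
          ∫⁻ t in Ioo (0:ℝ) m, ENNReal.ofReal (t ^ (e * r' - 1)) := by
      have hsplit : (Ioi (0:ℝ)) = Ioo 0 m ∪ Ici m := (Ioo_union_Ici_eq_Ioi hm).symm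
      have hdisj : Disjoint (Ioo (0:ℝ) m) (Ici m) :=
        Set.disjoint_left.2 fun x hx hx' => absurd hx.2 (not_lt.2 hx')
      rw [hsplit, lintegral_union measurableSet_Ici hdisj]
      have h2 : (∫⁻ t in Ici m, ENNReal.ofReal ((t ^ e * rearr g t) ^ r' / t)) = 0 := by
        refine le_antisymm ?_ zero_le
        refine le_of_le_of_eq (setLIntegral_mono' measurableSet_Ici fun t ht => ?_)
          (lintegral_zero (μ := volume.restrict (Ici m)))
        rw [hz t ht, mul_zero, Real.zero_rpow hrr.ne', zero_div, ofReal_zero]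
      rw [h2, add_zero]
      have h1 : (∫⁻ t in Ioo (0:ℝ) m, ENNReal.ofReal ((t ^ e * rearr g t) ^ r' / t))
          ≤ ∫⁻ t in Ioo (0:ℝ) m, ENNReal.ofReal (a ^ r' * t ^ (e * r' - 1)) := by
        refine setLIntegral_mono' measurableSet_Ioo fun t ht => ENNReal.ofReal_le_ofReal ?_
        obtain ⟨ht0, htm⟩ := ht
        have hA : (t ^ e * rearr g t) ^ r' ≤ (t ^ e * a) ^ r' :=
          Real.rpow_le_rpow (mul_nonneg (Real.rpow_nonneg ht0.le _) (stmt5_rearr_nonneg g t))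
            (mul_le_mul_of_nonneg_left (hbd t) (Real.rpow_nonneg ht0.le _)) hrr.le
        have hB : (t ^ e * a) ^ r' = a ^ r' * t ^ (e * r') := by
          rw [Real.mul_rpow (Real.rpow_nonneg ht0.le _) ha.le, ← Real.rpow_mul ht0.le,
            mul_comm]
        have hC : t ^ (e * r') / t = t ^ (e * r' - 1) := by
          rw [Real.rpow_sub ht0, Real.rpow_one]
        calc (t ^ e * rearr g t) ^ r' / t ≤ (t ^ e * a) ^ r' / t :=
              div_le_div_of_nonneg_right hA ht0.le
          _ = a ^ r' * t ^ (e * r' - 1) := by rw [hB, mul_div_assoc, hC]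
      refine le_trans h1 ?_
      have : ∀ t : ℝ, ENNReal.ofReal (a ^ r' * t ^ (e * r' - 1))
          = ENNReal.ofReal (a ^ r') * ENNReal.ofReal (t ^ (e * r' - 1)) := fun t =>
        ENNReal.ofReal_mul (by positivity)
      simp_rw [this]
      rw [lintegral_const_mul' _ _ ofReal_ne_top]
    calc (∫⁻ t in Ioi (0:ℝ), ENNReal.ofReal ((t ^ e * rearr g t) ^ r' / t)) ^ r'⁻¹
        ≤ (ENNReal.ofReal (a ^ r') *
            ∫⁻ t in Ioo (0:ℝ) m, ENNReal.ofReal (t ^ (e * r' - 1))) ^ r'⁻¹ :=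
          ENNReal.rpow_le_rpow key (by positivity)
      _ = ENNReal.ofReal (a ^ r') ^ r'⁻¹ *
            (∫⁻ t in Ioo (0:ℝ) m, ENNReal.ofReal (t ^ (e * r' - 1))) ^ r'⁻¹ :=
          ENNReal.mul_rpow_of_nonneg _ _ (by positivity)
      _ = ENNReal.ofReal a *
            (∫⁻ t in Ioo (0:ℝ) m, ENNReal.ofReal (t ^ (e * r' - 1))) ^ r'⁻¹ := by
          rw [ENNReal.ofReal_rpow_of_pos (by positivity), ← Real.rpow_mul ha.le,
            mul_inv_cancel₀ hrr.ne', Real.rpow_one]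

lemma stmt5_le_lorentzNorm {b : ℝ} (hr : 0 < r) (hb : 0 ≤ b) (hm : 0 < m)
    (hlow : ∀ t : ℝ, t ∈ Ioo 0 m → b ≤ rearr g t) :
    stmt5_Klo q r m * ENNReal.ofReal b ≤ lorentzNorm q r g := by
  set e := q.toReal⁻¹ with hedef
  rw [lorentzNorm, stmt5_Klo]
  rcases hb.eq_or_lt with hb0 | hb0
  · rw [← hb0, ofReal_zero, mul_zero]
    exact zero_le
  split_ifs with hrt
  · have hmem : (m/2) ∈ Ioi (0:ℝ) := by simpa using half_pos hm
    refine le_trans ?_ (le_biSup _ hmem)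
    rw [← ENNReal.ofReal_mul (Real.rpow_nonneg (by linarith) _)]
    refine ENNReal.ofReal_le_ofReal ?_
    exact mul_le_mul_of_nonneg_left (hlow _ ⟨half_pos hm, half_lt_self hm⟩)
      (Real.rpow_nonneg (by linarith) _)
  · have hrr : 0 < r.toReal := ENNReal.toReal_pos hr.ne' hrt
    set r' := r.toReal with hrdef
    set p := min ((m/2) ^ (e * r' - 1)) (m ^ (e * r' - 1)) with hpdef
    have hp0 : 0 < p := lt_min (Real.rpow_pos_of_pos (by linarith) _)
      (Real.rpow_pos_of_pos hm _)
    have key : (ENNReal.ofReal p * ENNReal.ofReal (m/2)) * ENNReal.ofReal (b ^ r')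
        ≤ ∫⁻ t in Ioi (0:ℝ), ENNReal.ofReal ((t ^ e * rearr g t) ^ r' / t) := by
      have hsub : Ioo (m/2) m ⊆ Ioi (0:ℝ) := fun x hx => lt_trans (half_pos hm) hx.1
      have step1 : (ENNReal.ofReal p * ENNReal.ofReal (m/2)) * ENNReal.ofReal (b ^ r')
          = ENNReal.ofReal (p * b ^ r') * volume (Ioo (m/2) m) := by
        rw [Real.volume_Ioo, ← ENNReal.ofReal_mul hp0.le,
          ← ENNReal.ofReal_mul (mul_nonneg hp0.le (by linarith : (0:ℝ) ≤ m/2)),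
          ← ENNReal.ofReal_mul (mul_nonneg hp0.le (Real.rpow_nonneg hb0.le _))]
        congr 1
        ring
      have step2 : ENNReal.ofReal (p * b ^ r') * volume (Ioo (m/2) m)
          = ∫⁻ _ in Ioo (m/2) m, ENNReal.ofReal (p * b ^ r') :=
        (setLIntegral_const _ _).symm
      have step3 : (∫⁻ _ in Ioo (m/2) m, ENNReal.ofReal (p * b ^ r'))
          ≤ ∫⁻ t in Ioo (m/2) m, ENNReal.ofReal ((t ^ e * rearr g t) ^ r' / t) := by
        refine setLIntegral_mono' measurableSet_Ioo fun t ht => ENNReal.ofReal_le_ofReal ?_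
        obtain ⟨ht1, ht2⟩ := ht
        have ht0 : 0 < t := lt_trans (half_pos hm) ht1
        have h1 : (t ^ e * b) ^ r' ≤ (t ^ e * rearr g t) ^ r' :=
          Real.rpow_le_rpow (by positivity)
            (mul_le_mul_of_nonneg_left
              (hlow t ⟨lt_trans (half_pos hm) ht1, ht2⟩)
              (Real.rpow_nonneg ht0.le _)) hrr.le
        have h2 : (t ^ e * b) ^ r' = t ^ (e * r') * b ^ r' := by
          rw [Real.mul_rpow (Real.rpow_nonneg ht0.le _) hb0.le, ← Real.rpow_mul ht0.le]
        have h3 : t ^ (e * r') / t = t ^ (e * r' - 1) := by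
          rw [Real.rpow_sub ht0, Real.rpow_one]
        have h4 : p ≤ t ^ (e * r' - 1) := by
          rcases le_or_gt 0 (e * r' - 1) with hc | hc
          · exact le_trans (min_le_left _ _)
              (Real.rpow_le_rpow (by linarith) ht1.le hc)
          · exact le_trans (min_le_right _ _)
              (Real.rpow_le_rpow_of_nonpos ht0 ht2.le hc.le)
        calc p * b ^ r' ≤ t ^ (e * r' - 1) * b ^ r' :=
              mul_le_mul_of_nonneg_right h4 (by positivity)
          _ = (t ^ e * b) ^ r' / t := by rw [h2, h3.symm]; ring
          _ ≤ (t ^ e * rearr g t) ^ r' / t := div_le_div_of_nonneg_right h1 ht0.le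
      refine le_trans (le_of_eq (step1.trans step2)) (le_trans step3 ?_)
      exact lintegral_mono_set hsub
    calc (ENNReal.ofReal p * ENNReal.ofReal (m/2)) ^ r'⁻¹ * ENNReal.ofReal b
        = ((ENNReal.ofReal p * ENNReal.ofReal (m/2)) * ENNReal.ofReal (b ^ r')) ^ r'⁻¹ := by
          have hbb : ENNReal.ofReal (b ^ r') ^ r'⁻¹ = ENNReal.ofReal b := by
            rw [ENNReal.ofReal_rpow_of_pos (by positivity), ← Real.rpow_mul hb0.le,
              mul_inv_cancel₀ hrr.ne', Real.rpow_one]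
          conv_rhs => rw [ENNReal.mul_rpow_of_nonneg _ _ (by positivity : (0:ℝ) ≤ r'⁻¹), hbb]
      _ ≤ (∫⁻ t in Ioi (0:ℝ),
            ENNReal.ofReal ((t ^ e * rearr g t) ^ r' / t)) ^ r'⁻¹ :=
          ENNReal.rpow_le_rpow key (by positivity)

end NormLemmas

section HeatLemmas
variable {d : ℕ}

lemma stmt5_gauss_cont (d : ℕ) : Continuous (gauss d 1) := by
  unfold gauss; fun_prop

lemma stmt5_gauss_nonneg (d : ℕ) (z : EuclideanSpace ℝ (Fin d)) : 0 ≤ gauss d 1 z := by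
  rw [gauss]; positivity

lemma stmt5_gauss_le (d : ℕ) (z : EuclideanSpace ℝ (Fin d)) :
    gauss d 1 z ≤ (4*Real.pi) ^ (-(d:ℝ)/2) := by
  rw [gauss, mul_one]
  nth_rewrite 2 [← mul_one ((4*Real.pi) ^ (-(d:ℝ)/2))]
  refine mul_le_mul_of_nonneg_left ?_ (Real.rpow_pos_of_pos (by positivity) _).le
  apply Real.exp_le_one_iff.2
  have h : 0 ≤ ‖z‖^2 / (4*1) := by positivity
  have h2 : -‖z‖^2/(4*1) = -(‖z‖^2/(4*1)) := neg_div _ _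
  linarith

lemma stmt5_gauss_ge (d : ℕ) (z : EuclideanSpace ℝ (Fin d)) (hz : ‖z‖ ≤ 2) :
    (4*Real.pi) ^ (-(d:ℝ)/2) * Real.exp (-1) ≤ gauss d 1 z := by
  rw [gauss, mul_one]
  refine mul_le_mul_of_nonneg_left ?_ (Real.rpow_pos_of_pos (by positivity) _).le
  apply Real.exp_le_exp.2
  rw [le_div_iff₀ (by norm_num : (0:ℝ) < 4*1)]
  nlinarith [norm_nonneg z]

lemma stmt5_rpow_le_exp {z s : ℝ} (hz : 0 ≤ z) (hs : 0 ≤ s) :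
    z ^ s ≤ Real.exp (s * z) := by
  rcases hz.eq_or_lt with h0 | h0
  · rw [← h0]
    rcases hs.eq_or_lt with h1 | h1
    · rw [← h1, Real.rpow_zero, mul_zero, Real.exp_zero]
    · rw [Real.zero_rpow h1.ne']
      positivity
  · rw [Real.rpow_def_of_pos h0]
    apply Real.exp_le_exp.2
    have h := Real.log_le_sub_one_of_pos h0
    calc Real.log z * s ≤ z * s := mul_le_mul_of_nonneg_right (by linarith) hs
      _ = s * z := mul_comm _ _

lemma stmt5_heat_repr (p : EuclideanSpace ℝ (Fin d)) (x : EuclideanSpace ℝ (Fin d)) :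
    heat 1 ((Metric.ball p 1).indicator fun _ => (1:ℝ)) x
      = ∫ y in Metric.ball p 1, gauss d 1 (x - y) := by
  rw [heat, ← integral_indicator measurableSet_ball]
  congr 1
  funext y
  by_cases hy : y ∈ Metric.ball p 1 <;>
    simp [Set.indicator_of_mem, Set.indicator_of_notMem, hy]

lemma stmt5_int (p x : EuclideanSpace ℝ (Fin d)) :
    IntegrableOn (fun y => gauss d 1 (x - y)) (Metric.ball p 1) :=
  (((stmt5_gauss_cont d).comp (continuous_const.sub continuous_id)).continuousOn.integrableOn_compact
    (isCompact_closedBall p 1)).mono_set ball_subset_closedBall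

lemma stmt5_heat_lower (p x : EuclideanSpace ℝ (Fin d)) (hx : x ∈ Metric.ball p 1) :
    (4*Real.pi) ^ (-(d:ℝ)/2) * Real.exp (-1) * (volume (Metric.ball p 1)).toReal
      ≤ heat 1 ((Metric.ball p 1).indicator fun _ => (1:ℝ)) x := by
  rw [stmt5_heat_repr]
  refine setIntegral_ge_of_const_le_real measurableSet_ball measure_ball_lt_top.ne
    (fun y hy => stmt5_gauss_ge d _ ?_) (stmt5_int p x)
  have h1 : dist x p < 1 := mem_ball.1 hx
  have h2 : dist y p < 1 := mem_ball.1 hy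
  calc ‖x - y‖ = dist x y := (dist_eq_norm x y).symm
    _ ≤ dist x p + dist p y := dist_triangle x p y
    _ ≤ 2 := by rw [dist_comm p y]; linarith

lemma stmt5_heat_nonneg (p x : EuclideanSpace ℝ (Fin d)) :
    0 ≤ heat 1 ((Metric.ball p 1).indicator fun _ => (1:ℝ)) x := by
  rw [stmt5_heat_repr]
  exact setIntegral_nonneg measurableSet_ball fun y _ => stmt5_gauss_nonneg d _

lemma stmt5_heat_upper (p x : EuclideanSpace ℝ (Fin d)) :
    heat 1 ((Metric.ball p 1).indicator fun _ => (1:ℝ)) x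
      ≤ (4*Real.pi) ^ (-(d:ℝ)/2) * (volume (Metric.ball p 1)).toReal := by
  rw [stmt5_heat_repr]
  calc (∫ y in Metric.ball p 1, gauss d 1 (x - y))
      ≤ ‖∫ y in Metric.ball p 1, gauss d 1 (x - y)‖ := le_abs_self _
    _ ≤ (4*Real.pi) ^ (-(d:ℝ)/2) * (volume (Metric.ball p 1)).toReal := by
        refine norm_setIntegral_le_of_norm_le_const measure_ball_lt_top fun y _ => ?_
        rw [Real.norm_eq_abs, abs_of_nonneg (stmt5_gauss_nonneg d _)]
        exact stmt5_gauss_le d _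

lemma stmt5_wheat_upper {s : ℝ} (hs : 0 ≤ s) (p x : EuclideanSpace ℝ (Fin d)) :
    ‖x‖ ^ s * heat 1 ((Metric.ball p 1).indicator fun _ => (1:ℝ)) x
      ≤ (4*Real.pi) ^ (-(d:ℝ)/2) * Real.exp (s*(‖p‖+1) + s^2)
        * (volume (Metric.ball p 1)).toReal := by
  rw [stmt5_heat_repr, ← integral_const_mul]
  set C := (4*Real.pi) ^ (-(d:ℝ)/2) * Real.exp (s*(‖p‖+1) + s^2) with hC
  calc (∫ y in Metric.ball p 1, ‖x‖ ^ s * gauss d 1 (x - y))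
      ≤ ‖∫ y in Metric.ball p 1, ‖x‖ ^ s * gauss d 1 (x - y)‖ := le_abs_self _
    _ ≤ C * (volume (Metric.ball p 1)).toReal := by
        refine norm_setIntegral_le_of_norm_le_const measure_ball_lt_top fun y hy => ?_
        rw [Real.norm_eq_abs,
          abs_of_nonneg (mul_nonneg (Real.rpow_nonneg (norm_nonneg x) s)
            (stmt5_gauss_nonneg d _))]
        have hyp : ‖y‖ ≤ ‖p‖ + 1 := by
          have h2 : dist y p < 1 := mem_ball.1 hy
          calc ‖y‖ ≤ ‖p‖ + ‖y - p‖ := norm_le_norm_add_norm_sub' y p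
            _ ≤ ‖p‖ + 1 := by rw [← dist_eq_norm]; linarith
        have hxy : ‖x‖ ≤ ‖x - y‖ + (‖p‖ + 1) := by
          calc ‖x‖ ≤ ‖y‖ + ‖x - y‖ := norm_le_norm_add_norm_sub' x y
            _ ≤ ‖x - y‖ + (‖p‖ + 1) := by linarith
        have h1 : ‖x‖ ^ s ≤ Real.exp (s * (‖x - y‖ + (‖p‖ + 1))) :=
          le_trans (Real.rpow_le_rpow (norm_nonneg x) hxy hs)
            (stmt5_rpow_le_exp (by positivity) hs)
        have hgpos : (0:ℝ) < (4*Real.pi) ^ (-(d:ℝ)/2) :=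
          Real.rpow_pos_of_pos (by positivity) _
        calc ‖x‖ ^ s * gauss d 1 (x - y)
            ≤ Real.exp (s * (‖x - y‖ + (‖p‖ + 1))) *
              ((4*Real.pi) ^ (-(d:ℝ)/2) * Real.exp (-‖x - y‖^2 / (4*1))) := by
              refine mul_le_mul h1 ?_ (stmt5_gauss_nonneg d _) (Real.exp_pos _).le
              rw [gauss, mul_one]
          _ = (4*Real.pi) ^ (-(d:ℝ)/2) *
              Real.exp (s * (‖x - y‖ + (‖p‖ + 1)) + -‖x - y‖^2 / (4*1)) := by
              rw [mul_left_comm, ← Real.exp_add]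
          _ ≤ C := by
              rw [hC]
              refine mul_le_mul_of_nonneg_left (Real.exp_le_exp.2 ?_) hgpos.le
              nlinarith [sq_nonneg (‖x - y‖/2 - s)]

end HeatLemmas

/-- necessity of `s₂ ≤ s₁` for the weighted smoothing estimate. -/
theorem stmt5 (d : ℕ) (hd : 0 < d) (q₁ q₂ r₁ r₂ : ℝ≥0∞) (s₁ s₂ : ℝ)
    (hq₁ : 1 < q₁) (hq₂ : 1 < q₂) (hr₁ : 0 < r₁) (hr₂ : 0 < r₂)
    (hinf₁ : q₁ = ⊤ → r₁ = ⊤) (hinf₂ : q₂ = ⊤ → r₂ = ⊤)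
    (C : ℝ) (hC : 0 < C)
    (hbound : ∀ t : ℝ, 0 < t → ∀ f : EuclideanSpace ℝ (Fin d) → ℝ, Measurable f →
      wLorentz q₂ r₂ s₂ (heat t f)
        ≤ ENNReal.ofReal
            (C * t ^ (-((d:ℝ)/2) * (q₁.toReal⁻¹ - q₂.toReal⁻¹) - (s₁ - s₂)/2)) *
          wLorentz q₁ r₁ s₁ f) :
    s₂ ≤ s₁ := by
  by_contra hcon
  push_neg at hcon
  haveI : Nonempty (Fin d) := ⟨⟨0, hd⟩⟩
  set x₀ : EuclideanSpace ℝ (Fin d) := EuclideanSpace.single (⟨0, hd⟩ : Fin d) (1:ℝ) with hx₀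
  have hx₀n : ‖x₀‖ = 1 := by rw [hx₀, EuclideanSpace.norm_single]; norm_num
  set m : ℝ := (volume (Metric.ball (0 : EuclideanSpace ℝ (Fin d)) 1)).toReal with hm_def
  have hmb : volume (Metric.ball (0 : EuclideanSpace ℝ (Fin d)) 1) = ENNReal.ofReal m :=
    (ENNReal.ofReal_toReal measure_ball_lt_top.ne).symm
  have hm : 0 < m :=
    ENNReal.toReal_pos (measure_ball_pos volume 0 one_pos).ne' measure_ball_lt_top.ne
  set g₁ : ℝ := (4*Real.pi) ^ (-(d:ℝ)/2) with hg₁def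
  have hg₁ : 0 < g₁ := Real.rpow_pos_of_pos (by positivity) _
  set c₀ : ℝ := g₁ * Real.exp (-1) * m with hc₀def
  have hc₀ : 0 < c₀ := by positivity
  have h2abs : ∀ s : ℝ, (0:ℝ) < 2 ^ |s| := fun s => Real.rpow_pos_of_pos (by norm_num) _
  have h2absn : ∀ s : ℝ, (0:ℝ) < 2 ^ (-|s|) := fun s => Real.rpow_pos_of_pos (by norm_num) _
  have hhalf_rpow : ∀ τ s : ℝ, 0 < τ → (τ/2) ^ s = 2^(-s) * τ^s := by
    intro τ s hτ
    rw [div_eq_mul_inv, Real.mul_rpow hτ.le (by positivity),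
      Real.inv_rpow (by norm_num : (0:ℝ) ≤ 2), ← Real.rpow_neg (by norm_num : (0:ℝ) ≤ 2)]
    ring
  have key : ∀ τ : ℝ, 3 ≤ τ →
      (stmt5_Klo q₂ r₂ m).toReal * (2 ^ (-|s₂|) * τ ^ s₂ * c₀)
        ≤ C * (2 ^ |s₁| * τ ^ s₁ * (stmt5_Kup q₁ r₁ m).toReal) := by
    intro τ hτ
    have hτ0 : (0:ℝ) < τ := by linarith
    set p : EuclideanSpace ℝ (Fin d) := τ • x₀ with hpdef
    have hpn : ‖p‖ = τ := by
      rw [hpdef, norm_smul, hx₀n, mul_one, Real.norm_eq_abs, abs_of_nonneg hτ0.le]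
    set f : EuclideanSpace ℝ (Fin d) → ℝ := (Metric.ball p 1).indicator fun _ => (1:ℝ)
      with hfdef
    have hfm : Measurable f := measurable_const.indicator measurableSet_ball
    have hvolB : volume (Metric.ball p 1) = ENNReal.ofReal m := by
      rw [Measure.addHaar_ball volume p zero_le_one, ← hmb,
        Measure.addHaar_ball volume (0 : EuclideanSpace ℝ (Fin d)) zero_le_one]
      simp
    have hvolBt : (volume (Metric.ball p 1)).toReal = m := by
      rw [hvolB, ENNReal.toReal_ofReal hm.le]
    have hballnorm : ∀ x ∈ Metric.ball p 1, τ/2 ≤ ‖x‖ ∧ ‖x‖ ≤ 2*τ := by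
      intro x hx
      have h1 : dist x p < 1 := Metric.mem_ball.1 hx
      have h2 : |‖x‖ - ‖p‖| ≤ ‖x - p‖ := abs_norm_sub_norm_le x p
      rw [← dist_eq_norm, hpn] at h2
      have h3 := abs_le.1 h2
      constructor <;> [linarith [h3.1]; linarith [h3.2]]
    have hheat_low : ∀ x ∈ Metric.ball p 1, c₀ ≤ heat 1 f x := by
      intro x hx
      have h := stmt5_heat_lower p x hx
      rw [hvolBt] at h
      exact h
    have hheat_up : ∀ x, heat 1 f x ≤ g₁ * m := by
      intro x
      have h := stmt5_heat_upper p x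
      rw [hvolBt] at h
      exact h
    have hheat_nn : ∀ x, 0 ≤ heat 1 f x := stmt5_heat_nonneg p
    set w : EuclideanSpace ℝ (Fin d) → ℝ := fun x => ‖x‖ ^ s₂ * heat 1 f x with hwdef
    have hwnn : ∀ x, 0 ≤ w x := fun x =>
      mul_nonneg (Real.rpow_nonneg (norm_nonneg x) _) (hheat_nn x)
    have hne : ∀ t : ℝ, 0 < t → ∃ lam, 0 < lam ∧ distFn w lam ≤ ENNReal.ofReal t := by
      intro t ht
      rcases le_or_gt 0 s₂ with hsgn | hsgn
      · refine ⟨g₁ * Real.exp (s₂*(τ+1) + s₂^2) * m + 1, by positivity, ?_⟩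
        have hM : ∀ x, |w x| ≤ g₁ * Real.exp (s₂*(τ+1) + s₂^2) * m := by
          intro x
          rw [abs_of_nonneg (hwnn x)]
          have h := stmt5_wheat_upper hsgn p x
          rw [hpn, hvolBt] at h
          exact h
        have hempty : {x | g₁ * Real.exp (s₂*(τ+1)+s₂^2) * m + 1 < |w x|}
            = (∅ : Set (EuclideanSpace ℝ (Fin d))) := by
          refine eq_empty_of_forall_notMem fun x hx => ?_
          simp only [mem_setOf_eq] at hx
          linarith [hM x]
        rw [distFn, hempty]
        simp
      · set r0 : ℝ := min 1 (t / (m+1)) with hr0def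
        have hr0 : 0 < r0 := lt_min one_pos (by positivity)
        have hr01 : r0 ≤ 1 := min_le_left _ _
        have hvr : volume (Metric.ball (0 : EuclideanSpace ℝ (Fin d)) r0)
            ≤ ENNReal.ofReal t := by
          rw [Measure.addHaar_ball volume _ hr0.le, hmb, finrank_euclideanSpace_fin]
          calc ENNReal.ofReal (r0 ^ d) * ENNReal.ofReal m
              ≤ ENNReal.ofReal r0 * ENNReal.ofReal (m+1) := by
                refine mul_le_mul' (ENNReal.ofReal_le_ofReal ?_)
                  (ENNReal.ofReal_le_ofReal (by linarith))
                calc r0 ^ d ≤ r0 ^ 1 := pow_le_pow_of_le_one hr0.le hr01 hd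
                  _ = r0 := pow_one r0
            _ = ENNReal.ofReal (r0 * (m+1)) := (ENNReal.ofReal_mul hr0.le).symm
            _ ≤ ENNReal.ofReal t := by
                refine ENNReal.ofReal_le_ofReal ?_
                have hr2 : r0 ≤ t/(m+1) := min_le_right _ _
                calc r0 * (m+1) ≤ (t/(m+1)) * (m+1) :=
                      mul_le_mul_of_nonneg_right hr2 (by linarith)
                  _ = t := div_mul_cancel₀ t (by positivity)
        refine ⟨g₁ * m * r0 ^ s₂, by positivity, ?_⟩
        refine le_trans (measure_mono ?_) hvr
        intro x hx
        simp only [mem_setOf_eq] at hx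
        rw [abs_of_nonneg (hwnn x)] at hx
        rw [mem_ball_zero_iff]
        by_contra hxr
        push_neg at hxr
        have hx0 : (0:ℝ) < ‖x‖ := lt_of_lt_of_le hr0 hxr
        have hub : w x ≤ ‖x‖ ^ s₂ * (g₁ * m) :=
          mul_le_mul_of_nonneg_left (hheat_up x) (Real.rpow_nonneg (norm_nonneg x) _)
        have hmono : ‖x‖ ^ s₂ ≤ r0 ^ s₂ := Real.rpow_le_rpow_of_nonpos hr0 hxr hsgn.le
        have h2 : ‖x‖ ^ s₂ * (g₁*m) ≤ r0 ^ s₂ * (g₁*m) :=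
          mul_le_mul_of_nonneg_right hmono (by positivity)
        nlinarith
    have hb' : (0:ℝ) < 2 ^ (-|s₂|) * τ ^ s₂ * c₀ := by positivity
    have hwlow : ∀ x ∈ Metric.ball p 1, 2 ^ (-|s₂|) * τ ^ s₂ * c₀ ≤ |w x| := by
      intro x hx
      rw [abs_of_nonneg (hwnn x)]
      obtain ⟨hl, hu⟩ := hballnorm x hx
      have hxnorm : (0:ℝ) < ‖x‖ := lt_of_lt_of_le (by linarith) hl
      have hrp : 2 ^ (-|s₂|) * τ ^ s₂ ≤ ‖x‖ ^ s₂ := by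
        rcases le_or_gt 0 s₂ with h | h
        · have h1 : (τ/2) ^ s₂ ≤ ‖x‖ ^ s₂ := Real.rpow_le_rpow (by positivity) hl h
          have h2 := hhalf_rpow τ s₂ hτ0
          rw [abs_of_nonneg h]
          linarith
        · have h1 : (2*τ) ^ s₂ ≤ ‖x‖ ^ s₂ :=
            Real.rpow_le_rpow_of_nonpos hxnorm hu h.le
          have h2 : (2*τ) ^ s₂ = 2^s₂ * τ^s₂ :=
            Real.mul_rpow (by norm_num) hτ0.le
          rw [abs_of_neg h, neg_neg]
          linarith
      calc 2 ^ (-|s₂|) * τ ^ s₂ * c₀ ≤ ‖x‖ ^ s₂ * heat 1 f x :=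
            mul_le_mul hrp (hheat_low x hx) hc₀.le (Real.rpow_nonneg (norm_nonneg x) _)
        _ = w x := rfl
    have step1 : stmt5_Klo q₂ r₂ m * ENNReal.ofReal (2^(-|s₂|) * τ^s₂ * c₀)
        ≤ wLorentz q₂ r₂ s₂ (heat 1 f) := by
      refine stmt5_le_lorentzNorm hr₂ hb'.le hm ?_
      intro t ht
      refine stmt5_le_rearr (A := Metric.ball p 1) ?_ hwlow (hne t ht.1)
      rw [hvolB]
      exact (ENNReal.ofReal_lt_ofReal_iff hm).2 ht.2
    have ha₁ : (0:ℝ) < 2^|s₁| * τ^s₁ := by positivity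
    have hfa : ∀ x, |‖x‖ ^ s₁ * f x| ≤ 2^|s₁| * τ^s₁ := by
      intro x
      by_cases hx : x ∈ Metric.ball p 1
      · rw [hfdef, Set.indicator_of_mem hx, mul_one,
          abs_of_nonneg (Real.rpow_nonneg (norm_nonneg x) _)]
        obtain ⟨hl, hu⟩ := hballnorm x hx
        rcases le_or_gt 0 s₁ with h | h
        · have h1 : ‖x‖ ^ s₁ ≤ (2*τ) ^ s₁ := Real.rpow_le_rpow (norm_nonneg x) hu h
          have h2 : (2*τ) ^ s₁ = 2^s₁ * τ^s₁ := Real.mul_rpow (by norm_num) hτ0.le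
          rw [abs_of_nonneg h]
          linarith
        · have h1 : ‖x‖ ^ s₁ ≤ (τ/2) ^ s₁ :=
            Real.rpow_le_rpow_of_nonpos (by linarith) hl h.le
          have h2 := hhalf_rpow τ s₁ hτ0
          rw [abs_of_neg h]
          linarith
      · rw [hfdef, Set.indicator_of_notMem hx, mul_zero, abs_zero]
        positivity
    have hsupp : volume {x | ‖x‖ ^ s₁ * f x ≠ 0} ≤ ENNReal.ofReal m := by
      rw [← hvolB]
      refine measure_mono ?_
      intro x hx
      simp only [mem_setOf_eq] at hx
      by_contra hxB
      exact hx (by rw [hfdef, Set.indicator_of_notMem hxB, mul_zero])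
    have hup1 : wLorentz q₁ r₁ s₁ f
        ≤ ENNReal.ofReal (2^|s₁| * τ^s₁) * stmt5_Kup q₁ r₁ m :=
      stmt5_lorentzNorm_le hq₁ hr₁ hinf₁ ha₁ hm
        (fun t => stmt5_rearr_le_of_bound t ha₁ hfa)
        (fun t ht => stmt5_rearr_eq_zero hsupp ht)
    have hb1 := hbound 1 one_pos f hfm
    rw [Real.one_rpow, mul_one] at hb1
    have chain : stmt5_Klo q₂ r₂ m * ENNReal.ofReal (2^(-|s₂|) * τ^s₂ * c₀)
        ≤ ENNReal.ofReal C * (ENNReal.ofReal (2^|s₁| * τ^s₁) * stmt5_Kup q₁ r₁ m) :=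
      le_trans step1 (le_trans hb1 (mul_le_mul_right hup1 _))
    have hKupfin := stmt5_Kup_lt_top hq₁ hr₁ hinf₁ hm
    have hrhs_ne : ENNReal.ofReal C * (ENNReal.ofReal (2^|s₁| * τ^s₁) * stmt5_Kup q₁ r₁ m)
        ≠ ⊤ := (ENNReal.mul_lt_top ofReal_lt_top
          (ENNReal.mul_lt_top ofReal_lt_top hKupfin)).ne
    have hfinal := ENNReal.toReal_mono hrhs_ne chain
    rw [ENNReal.toReal_mul, ENNReal.toReal_mul, ENNReal.toReal_mul,
      ENNReal.toReal_ofReal hb'.le, ENNReal.toReal_ofReal hC.le,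
      ENNReal.toReal_ofReal ha₁.le] at hfinal
    linarith [hfinal]
  -- derive contradiction
  set κ := (stmt5_Klo q₂ r₂ m).toReal with hκdef
  have hκ : 0 < κ := ENNReal.toReal_pos (stmt5_Klo_pos hm).ne' (stmt5_Klo_ne_top hm)
  set K := (stmt5_Kup q₁ r₁ m).toReal with hKdef
  have hK0 : 0 ≤ K := ENNReal.toReal_nonneg
  set D := (C * (2^|s₁| * K) * 2^|s₂|) / (κ * c₀) with hDdef
  have hτbig : ∀ τ : ℝ, 3 ≤ τ → τ ^ (s₂ - s₁) ≤ D := by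
    intro τ hτ
    have hτ0 : (0:ℝ) < τ := by linarith
    have h := key τ hτ
    have hp2 : (0:ℝ) < (2:ℝ)^|s₂| := h2abs s₂
    have hmul : (2:ℝ)^(-|s₂|) * 2^|s₂| = 1 := by
      rw [← Real.rpow_add (by norm_num : (0:ℝ) < 2), neg_add_cancel, Real.rpow_zero]
    rw [Real.rpow_sub hτ0, div_le_iff₀ (Real.rpow_pos_of_pos hτ0 s₁), hDdef,
      div_mul_eq_mul_div, le_div_iff₀ (by positivity : (0:ℝ) < κ * c₀)]
    have hid : τ ^ s₂ * (κ * c₀) = (κ * (2^(-|s₂|) * τ^s₂ * c₀)) * 2^|s₂| := by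
      linear_combination (-(κ * τ ^ s₂ * c₀)) * hmul
    calc τ ^ s₂ * (κ * c₀) = (κ * (2^(-|s₂|) * τ^s₂ * c₀)) * 2^|s₂| := hid
      _ ≤ (C * (2^|s₁| * τ^s₁ * K)) * 2^|s₂| := mul_le_mul_of_nonneg_right h hp2.le
      _ = C * (2^|s₁| * K) * 2^|s₂| * τ^s₁ := by ring
  have hδ : (0:ℝ) < s₂ - s₁ := by linarith
  obtain ⟨τ, hτD, hτ3⟩ :=
    (((tendsto_rpow_atTop hδ).eventually_gt_atTop D).and (eventually_ge_atTop 3)).exists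
  exact absurd (hτbig τ hτ3) (not_le.2 hτD)
end

section
/- Let $d \ge 3$, $\gamma > -2$, and let $\mathfrak{u}$ be a positive $C^2$ function on $(0,\infty)$ with $\mathfrak{u}(t), \mathfrak{u}'(t) \to 0$ as $t \to \infty$, satisfying $\mathfrak{u}'(t) + (d-2)\mathfrak{u}(t) = \int_t^\infty \mathfrak{u}(\tau)^{\frac{d+\gamma}{d-2}} d\tau$ for all $t > 0$. If $\lim_{t\to\infty} \frac{\mathfrak{u}'(t)}{\mathfrak{u}(t)} = m$ exists with $-(d-2) < m < 0$, then a contradiction follows; hence the limit, if it exists, must equal $0$ or $-(d-2)$. -/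
open MeasureTheory Set Filter ENNReal

/-- the logarithmic derivative cannot converge to `m ∈ (-(d-2),0)`. -/
theorem stmt13 (d : ℕ) (hd : 3 ≤ d) (γ : ℝ) (hγ : -2 < γ) (m : ℝ)
    (u u' : ℝ → ℝ)
    (hpos : ∀ t ∈ Set.Ioi (0:ℝ), 0 < u t)
    (hu' : ∀ t ∈ Set.Ioi (0:ℝ), HasDerivAt u (u' t) t)
    (hu'' : ∀ t ∈ Set.Ioi (0:ℝ), DifferentiableAt ℝ u' t)
    (hu0 : Filter.Tendsto u Filter.atTop (nhds 0))
    (hu'0 : Filter.Tendsto u' Filter.atTop (nhds 0))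
    (hie : ∀ t ∈ Set.Ioi (0:ℝ),
      u' t + ((d:ℝ) - 2) * u t
        = ∫ τ in Set.Ioi t, u τ ^ (((d:ℝ) + γ)/((d:ℝ) - 2)))
    (hrat : Filter.Tendsto (fun t => u' t / u t) Filter.atTop (nhds m))
    (hm1 : -((d:ℝ) - 2) < m) (hm2 : m < 0) :
    False := by
  -- basic constants
  set p : ℝ := ((d:ℝ) + γ)/((d:ℝ) - 2) with hpdef
  have hd3 : (3:ℝ) ≤ (d:ℝ) := by exact_mod_cast hd
  have hd2 : (0:ℝ) < (d:ℝ) - 2 := by linarith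
  have hp1 : 1 < p := by
    rw [hpdef, lt_div_iff₀ hd2]; linarith
  have hp0 : 0 < p := lt_trans one_pos hp1
  set c : ℝ := p * (m/2) with hcdef
  have hc : c < 0 := mul_neg_of_pos_of_neg hp0 (by linarith)
  set δ : ℝ := (m + ((d:ℝ) - 2))/2 with hδdef
  have hδ : 0 < δ := by rw [hδdef]; linarith
  set K : ℝ := 1/(-c) with hKdef
  -- eventually u'/u < m/2
  have ev1 : ∀ᶠ t in atTop, u' t / u t < m/2 :=
    hrat.eventually_lt_const (by linarith)
  have ev2 : ∀ᶠ t in atTop, m - δ < u' t / u t :=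
    hrat.eventually_const_lt (by linarith)
  have ev3 : ∀ᶠ t in atTop, u t ^ (p-1) * K < δ := by
    have h0 : Filter.Tendsto (fun t => u t ^ (p-1) * K) atTop (nhds (0 ^ (p-1) * K)) :=
      (hu0.rpow_const (Or.inr (by linarith))).mul_const K
    rw [Real.zero_rpow (by linarith), zero_mul] at h0
    exact h0.eventually_lt_const hδ
  obtain ⟨T, hT⟩ := ((ev1.and ev2).and (ev3.and (eventually_gt_atTop (0:ℝ)))).exists_forall_of_atTop
  -- key exponential bound on [T, ∞)
  have hgd : ∀ s ∈ Set.Ioi (0:ℝ), HasDerivAt (fun s => Real.log (u s) - (m/2) * s)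
      (u' s / u s - m/2) s := by
    intro s hs
    have h1 : HasDerivAt (fun s => Real.log (u s)) (u' s / u s) s :=
      (hu' s hs).log (ne_of_gt (hpos s hs))
    have h2 : HasDerivAt (fun s => (m/2) * s) (m/2) s := by
      simpa using (hasDerivAt_id s).const_mul (m/2)
    exact h1.sub h2
  -- from here fix a base point arbitrary t with T < t
  have key : ∀ t, T < t → ∀ τ, t ≤ τ → u τ ≤ u t * Real.exp ((m/2) * (τ - t)) := by
    intro t ht τ hτ
    have htpos : (0:ℝ) < t := lt_trans (hT T le_rfl).2.2 ht
    have hanti : AntitoneOn (fun s => Real.log (u s) - (m/2) * s) (Set.Ici t) := by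
      apply antitoneOn_of_deriv_nonpos (convex_Ici t)
      · intro s hs
        exact ((hgd s (lt_of_lt_of_le htpos hs)).continuousAt).continuousWithinAt
      · intro s hs
        rw [interior_Ici] at hs
        exact ((hgd s (lt_trans htpos hs)).differentiableAt).differentiableWithinAt
      · intro s hs
        rw [interior_Ici] at hs
        rw [(hgd s (lt_trans htpos hs)).deriv]
        have := (hT s (le_of_lt (lt_trans ht hs))).1.1
        linarith
    have h := hanti (Set.self_mem_Ici) (Set.mem_Ici.2 hτ) hτ
    simp only at h
    have hlog : Real.log (u τ) ≤ Real.log (u t) + (m/2) * (τ - t) := by linarith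
    have hτpos : (0:ℝ) < τ := lt_of_lt_of_le htpos hτ
    calc u τ = Real.exp (Real.log (u τ)) := (Real.exp_log (hpos τ hτpos)).symm
      _ ≤ Real.exp (Real.log (u t) + (m/2) * (τ - t)) := Real.exp_le_exp.2 hlog
      _ = u t * Real.exp ((m/2) * (τ - t)) := by
          rw [Real.exp_add, Real.exp_log (hpos t htpos)]
  -- pick t
  set t : ℝ := T + 1 with htdef
  have htT : T < t := by rw [htdef]; linarith
  have htpos : (0:ℝ) < t := lt_trans (hT T le_rfl).2.2 htT
  have hut : 0 < u t := hpos t htpos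
  -- value of the dominating integral
  have hint : IntegrableOn (fun τ => Real.exp (c * (τ - t))) (Set.Ioi t) := by
    have h := (exp_neg_integrableOn_Ioi t (neg_pos.2 hc)).const_mul (Real.exp (-(c*t)))
    refine MeasureTheory.IntegrableOn.congr_fun h ?_ measurableSet_Ioi
    intro x _
    simp only [← Real.exp_add]
    ring_nf
  have hderivF : ∀ x ∈ Set.Ioi t, HasDerivAt (fun τ => Real.exp (c * (τ - t)) / c)
      (Real.exp (c * (x - t))) x := by
    intro x _
    have h1 : HasDerivAt (fun τ => c * (τ - t)) c x := by
      simpa using ((hasDerivAt_id x).sub_const t).const_mul c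
    have h2 := (h1.exp).div_const c
    have hc0 : c ≠ 0 := ne_of_lt hc
    rw [mul_div_cancel_right₀ _ hc0] at h2
    exact h2
  have htend : Filter.Tendsto (fun τ => Real.exp (c * (τ - t)) / c) atTop (nhds 0) := by
    have h1 : Filter.Tendsto (fun τ : ℝ => c * (τ - t)) atTop atBot := by
      apply Filter.Tendsto.const_mul_atTop_of_neg hc
      exact tendsto_atTop_add_const_right atTop (-t) tendsto_id
    have h2 := (Real.tendsto_exp_atBot.comp h1).div_const c
    simpa using h2
  have hval : ∫ τ in Set.Ioi t, Real.exp (c * (τ - t)) = K := by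
    have hcont : ContinuousWithinAt (fun τ => Real.exp (c * (τ - t)) / c) (Set.Ici t) t :=
      ((Real.continuous_exp.comp (by fun_prop : Continuous fun τ : ℝ => c * (τ - t))).div_const c).continuousAt.continuousWithinAt
    rw [integral_Ioi_of_hasDerivAt_of_tendsto hcont hderivF hint htend]
    have h0 : Real.exp (c * (t - t)) = 1 := by rw [sub_self, mul_zero, Real.exp_zero]
    have hc0 : c ≠ 0 := ne_of_lt hc
    rw [hKdef, h0]
    field_simp
    ring
  -- bound the integral
  have hbound : ∫ τ in Set.Ioi t, u τ ^ p ≤ u t ^ p * K := by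
    rw [← hval, ← MeasureTheory.integral_const_mul]
    apply MeasureTheory.integral_mono_of_nonneg
    · filter_upwards [MeasureTheory.ae_restrict_mem measurableSet_Ioi] with τ hτ
      exact Real.rpow_nonneg (hpos τ (lt_trans htpos hτ)).le p
    · exact hint.const_mul _
    · filter_upwards [MeasureTheory.ae_restrict_mem measurableSet_Ioi] with τ hτ
      have hτt : t ≤ τ := le_of_lt hτ
      have h1 : u τ ≤ u t * Real.exp ((m/2) * (τ - t)) := key t htT τ hτt
      have h2 : u τ ^ p ≤ (u t * Real.exp ((m/2) * (τ - t))) ^ p :=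
        Real.rpow_le_rpow (hpos τ (lt_trans htpos hτ)).le h1 hp0.le
      calc u τ ^ p ≤ (u t * Real.exp ((m/2) * (τ - t))) ^ p := h2
        _ = u t ^ p * Real.exp (c * (τ - t)) := by
            rw [Real.mul_rpow hut.le (Real.exp_pos _).le, ← Real.exp_mul]
            ring_nf
            rw [hcdef]; ring_nf
  -- the contradiction
  have heq := hie t htpos
  have hlow : δ * u t < u' t + ((d:ℝ) - 2) * u t := by
    have h1 : m - δ < u' t / u t := (hT t htT.le).1.2
    have h2 : (m - δ) * u t < u' t := (lt_div_iff₀ hut).1 h1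
    nlinarith [hut]
  have hup : u t ^ p = u t ^ (p-1) * u t := by
    have hpp : p - 1 + 1 = p := by ring
    have h := Real.rpow_add hut (p-1) 1
    rw [hpp, Real.rpow_one] at h
    exact h
  have hsmall : u t ^ p * K < δ * u t := by
    rw [hup]
    have h3 : u t ^ (p-1) * K < δ := (hT t htT.le).2.1
    have h4 : 0 ≤ u t ^ (p-1) := Real.rpow_nonneg hut.le _
    nlinarith
  rw [heq] at hlow
  exact absurd (lt_of_le_of_lt hbound hsmall) (not_lt.2 hlow.le)
end

section
/- Let $d \ge 3$, $\gamma > -2$, and let $\mathfrak{u}$ be a positive $C^2$ function on $(0,\infty)$ with $\mathfrak{u}(t), \mathfrak{u}'(t) \to 0$ as $t \to \infty$, satisfying $\mathfrak{u}'(t) + (d-2)\mathfrak{u}(t) = \int_t^\infty \mathfrak{u}(\tau)^{\frac{d+\gamma}{d-2}} d\tau$ for all $t > 0$, and $\lim_{t\to\infty}\frac{\mathfrak{u}'(t)}{\mathfrak{u}(t)} = 0$. Then $\lim_{t\to\infty} t^{\frac{d-2}{2+\gamma}} \mathfrak{u}(t) = \left(\frac{(d-2)^2}{2+\gamma}\right)^{\frac{d-2}{2+\gamma}}$.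 -/
open MeasureTheory Set Filter ENNReal

/-- If `F` has derivative `g t` at every `t > a` and `g → L` at infinity,
then `F t / t → L`. -/
lemma tendsto_div_id_of_hasDerivAt {F g : ℝ → ℝ} {L a : ℝ}
    (h : ∀ t ∈ Set.Ioi a, HasDerivAt F (g t) t)
    (hg : Filter.Tendsto g Filter.atTop (nhds L)) :
    Filter.Tendsto (fun t => F t / t) Filter.atTop (nhds L) := by
  rw [Metric.tendsto_atTop]
  intro ε hε
  obtain ⟨T₀, hT₀⟩ := (Metric.tendsto_atTop.mp hg (ε / 2) (by positivity))
  set T : ℝ := max T₀ (max (a + 1) 1) with hTdef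
  have hTa : a < T := lt_of_lt_of_le (by linarith) (le_trans (le_max_left _ _) (le_max_right _ _))
  have hT1 : (1 : ℝ) ≤ T := le_trans (le_max_right _ _) (le_max_right _ _)
  have hT0 : (0 : ℝ) < T := by linarith
  have hbound : ∀ s ∈ Set.Ici T, |g s - L| ≤ ε / 2 := by
    intro s hs
    have : dist (g s) L < ε / 2 := hT₀ s (le_trans (le_max_left _ _) hs)
    rw [Real.dist_eq] at this; linarith
  -- G := F - L * id has small derivative on Ici T
  have hG : ∀ s ∈ Set.Ici T, HasDerivWithinAt (fun x => F x - L * x) (g s - L) (Set.Ici T) s := by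
    intro s hs
    have : HasDerivAt (fun x => F x - L * x) (g s - L) s := by
      exact ((h s (lt_of_lt_of_le hTa hs)).sub ((hasDerivAt_id' s).const_mul L)).congr_deriv (by ring)
    exact this.hasDerivWithinAt
  have key : ∀ t ∈ Set.Ici T, |(F t - L * t) - (F T - L * T)| ≤ ε / 2 * (t - T) := by
    intro t ht
    have := Convex.norm_image_sub_le_of_norm_hasDerivWithin_le hG
      (fun s hs => by simpa [Real.norm_eq_abs] using hbound s hs) (convex_Ici T)
      (Set.self_mem_Ici) ht
    simpa [Real.norm_eq_abs, abs_of_nonneg (by linarith [mem_Ici.mp ht] : (0:ℝ) ≤ t - T)]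
      using this
  set C : ℝ := |F T - L * T| with hC
  refine ⟨max T (2 * C / ε + 1), fun t ht => ?_⟩
  have htT : T ≤ t := le_trans (le_max_left _ _) ht
  have htC : 2 * C / ε + 1 ≤ t := le_trans (le_max_right _ _) ht
  have ht0 : (0 : ℝ) < t := by linarith
  have hC0 : 0 ≤ C := abs_nonneg _
  have h1 : |F t - L * t| ≤ ε / 2 * t + C := by
    have h2 : |F t - L * t| ≤ |(F t - L * t) - (F T - L * T)| + |F T - L * T| := by
      have := abs_add_le ((F t - L * t) - (F T - L * T)) (F T - L * T)
      simpa using this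
    have h3 := key t htT
    nlinarith
  have hCt : C / t < ε / 2 := by
    rw [div_lt_iff₀ ht0]
    have he : ε * (2 * C / ε + 1) = 2 * C + ε := by field_simp
    nlinarith [mul_le_mul_of_nonneg_left htC (le_of_lt hε)]
  have hdist : F t / t - L = (F t - L * t) / t := by field_simp
  rw [Real.dist_eq, hdist, abs_div, abs_of_pos ht0]
  calc |F t - L * t| / t ≤ (ε / 2 * t + C) / t := by gcongr
    _ = ε / 2 + C / t := by field_simp
    _ < ε / 2 + ε / 2 := by linarith
    _ = ε := by ring

/-- the sharp logarithmic rate when `u'/u → 0`. -/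
theorem stmt15 (d : ℕ) (hd : 3 ≤ d) (γ : ℝ) (hγ : -2 < γ)
    (u u' : ℝ → ℝ)
    (hpos : ∀ t ∈ Set.Ioi (0:ℝ), 0 < u t)
    (hu' : ∀ t ∈ Set.Ioi (0:ℝ), HasDerivAt u (u' t) t)
    (hu'' : ∀ t ∈ Set.Ioi (0:ℝ), DifferentiableAt ℝ u' t)
    (hu0 : Filter.Tendsto u Filter.atTop (nhds 0))
    (hu'0 : Filter.Tendsto u' Filter.atTop (nhds 0))
    (hie : ∀ t ∈ Set.Ioi (0:ℝ),
      u' t + ((d:ℝ) - 2) * u t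
        = ∫ τ in Set.Ioi t, u τ ^ (((d:ℝ) + γ)/((d:ℝ) - 2)))
    (hrat : Filter.Tendsto (fun t => u' t / u t) Filter.atTop (nhds 0)) :
    Filter.Tendsto (fun t => t ^ (((d:ℝ) - 2)/(2 + γ)) * u t) Filter.atTop
      (nhds ((((d:ℝ) - 2) ^ 2 / (2 + γ)) ^ (((d:ℝ) - 2)/(2 + γ)))) := by
  have hd3 : (3:ℝ) ≤ (d:ℝ) := by exact_mod_cast hd
  have hc : (0:ℝ) < (d:ℝ) - 2 := by linarith
  have hγ2 : (0:ℝ) < 2 + γ := by linarith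
  set p : ℝ := ((d:ℝ) + γ) / ((d:ℝ) - 2) with hpdef
  set α : ℝ := ((d:ℝ) - 2) / (2 + γ) with hαdef
  have hp1 : 1 < p := by
    rw [hpdef, lt_div_iff₀ hc]; linarith
  have hq : p - 1 = (2 + γ)/((d:ℝ)-2) := by rw [hpdef]; field_simp; ring
  have hpα : (p - 1) * α = 1 := by rw [hq, hαdef]; field_simp
  set f : ℝ → ℝ := fun τ => u τ ^ p with hfdef
  have hfc : ∀ t ∈ Set.Ioi (0:ℝ), ContinuousAt f t := fun t ht =>
    ((hu' t ht).continuousAt).rpow_const (Or.inr (by linarith))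
  have hloc : ∀ a b : ℝ, 0 < a → IntegrableOn f (Set.Icc a b) := by
    intro a b ha
    apply ContinuousOn.integrableOn_Icc
    intro x hx
    exact (hfc x (lt_of_lt_of_le ha hx.1)).continuousWithinAt
  have hint1 : IntegrableOn f (Set.Ioi (1:ℝ)) := by
    by_contra hni
    have hall : ∀ t ∈ Set.Ioi (0:ℝ), ¬ IntegrableOn f (Set.Ioi t) := by
      intro t _ hI
      rcases le_or_gt t 1 with h | h
      · exact hni (hI.mono_set (Set.Ioi_subset_Ioi h))
      · have h2 : IntegrableOn f (Set.Ioc 1 t) :=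
          (hloc 1 t one_pos).mono_set Set.Ioc_subset_Icc_self
        have h3 := h2.union hI
        rw [Set.Ioc_union_Ioi_eq_Ioi h.le] at h3
        exact hni h3
    have hzero : ∀ t ∈ Set.Ioi (0:ℝ), u' t / u t = -((d:ℝ) - 2) := by
      intro t ht
      have h0 := hie t ht
      rw [MeasureTheory.integral_undef (hall t ht)] at h0
      rw [div_eq_iff (hpos t ht).ne']
      linarith
    have hten : Filter.Tendsto (fun t => u' t / u t) Filter.atTop (nhds (-((d:ℝ)-2))) := by
      apply Filter.Tendsto.congr' _ tendsto_const_nhds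
      filter_upwards [eventually_gt_atTop (0:ℝ)] with t ht
      exact (hzero t ht).symm
    have := tendsto_nhds_unique hrat hten
    linarith
  have hintt : ∀ t ∈ Set.Ioi (0:ℝ), IntegrableOn f (Set.Ioi t) := by
    intro t ht
    rcases le_or_gt 1 t with h | h
    · exact hint1.mono_set (Set.Ioi_subset_Ioi h)
    · have h2 : IntegrableOn f (Set.Ioc t 1) := (hloc t 1 ht).mono_set Set.Ioc_subset_Icc_self
      have h3 := h2.union hint1
      rwa [Set.Ioc_union_Ioi_eq_Ioi h.le] at h3
  set ψ : ℝ → ℝ := fun t => ∫ τ in Set.Ioi t, f τ with hψdef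
  have hψeq : ∀ t ∈ Set.Ioi (0:ℝ), ψ t = u' t + ((d:ℝ) - 2) * u t := fun t ht => (hie t ht).symm
  have hψpos : ∀ t ∈ Set.Ioi (0:ℝ), 0 < ψ t := by
    intro t ht
    have hnonneg : (0:ℝ→ℝ) ≤ᵐ[volume.restrict (Set.Ioi t)] f := by
      filter_upwards [MeasureTheory.ae_restrict_mem measurableSet_Ioi] with x hx
      exact (Real.rpow_pos_of_pos (hpos x (Set.mem_Ioi.mpr (lt_trans (Set.mem_Ioi.mp ht) (Set.mem_Ioi.mp hx)))) p).le
    have hsub : Set.Ioi t ⊆ Function.support f ∩ Set.Ioi t := fun x hx =>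
      ⟨(Real.rpow_pos_of_pos (hpos x (Set.mem_Ioi.mpr (lt_trans (Set.mem_Ioi.mp ht) (Set.mem_Ioi.mp hx)))) p).ne', hx⟩
    have h0 : (0:ℝ≥0∞) < volume (Function.support f ∩ Set.Ioi t) := by
      refine lt_of_lt_of_le ?_ (measure_mono hsub)
      simp [Real.volume_Ioi]
    exact (MeasureTheory.setIntegral_pos_iff_support_of_nonneg_ae hnonneg (hintt t ht)).mpr h0
  have hψ' : ∀ t ∈ Set.Ioi (0:ℝ), HasDerivAt ψ (-(f t)) t := by
    intro t ht
    have ht' : (0:ℝ) < t := ht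
    set a : ℝ := t/2 with hadef
    have ha : 0 < a := by positivity
    have hat : a < t := by linarith
    have hiu : IntegrableOn f (Set.uIcc a t) := by
      rw [Set.uIcc_of_le hat.le]; exact hloc a t ha
    have hsm : StronglyMeasurableAtFilter f (nhds t) volume :=
      ContinuousAt.stronglyMeasurableAtFilter isOpen_Ioi hfc t ht
    have hFT : HasDerivAt (fun s => ∫ x in a..s, f x) (f t) t :=
      intervalIntegral.integral_hasDerivAt_right hiu.intervalIntegrable hsm (hfc t ht)
    have h2 : HasDerivAt (fun s => ψ a - ∫ x in a..s, f x) (-(f t)) t := by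
      exact ((hasDerivAt_const t (ψ a)).sub hFT).congr_deriv (by ring)
    apply h2.congr_of_eventuallyEq
    filter_upwards [Ioi_mem_nhds hat] with s hs
    have hs' : a < s := hs
    have hsplit : ψ a = (∫ τ in Set.Ioc a s, f τ) + ∫ τ in Set.Ioi s, f τ := by
      rw [← MeasureTheory.setIntegral_union (Set.Ioc_disjoint_Ioi le_rfl) measurableSet_Ioi
          ((hloc a s ha).mono_set Set.Ioc_subset_Icc_self) (hintt s (lt_trans ha hs')),
        Set.Ioc_union_Ioi_eq_Ioi hs'.le]
    have hiv : (∫ x in a..s, f x) = ∫ τ in Set.Ioc a s, f τ :=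
      intervalIntegral.integral_of_le hs'.le
    have : ψ s = ∫ τ in Set.Ioi s, f τ := rfl
    rw [this, hiv]
    linarith [hsplit]
  set F : ℝ → ℝ := fun t => ψ t ^ (1 - p) with hFdef
  set g : ℝ → ℝ := fun t => (p - 1) * (u' t / u t + ((d:ℝ) - 2)) ^ (-p) with hgdef
  have hψu : ∀ t ∈ Set.Ioi (0:ℝ), ψ t / u t = u' t / u t + ((d:ℝ) - 2) := by
    intro t ht
    rw [hψeq t ht]
    field_simp [(hpos t ht).ne']
  have hF' : ∀ t ∈ Set.Ioi (0:ℝ), HasDerivAt F (g t) t := by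
    intro t ht
    have h1 := (hψ' t ht).rpow_const (p := 1 - p) (Or.inl (hψpos t ht).ne')
    have hut := hpos t ht
    have hψt := hψpos t ht
    convert h1 using 1
    rw [hgdef]
    simp only
    rw [← hψu t ht, Real.div_rpow hψt.le hut.le]
    rw [show (1:ℝ) - p - 1 = -p by ring]
    rw [Real.rpow_neg hψt.le, Real.rpow_neg hut.le]
    rw [hfdef]
    simp only
    have h3 : ψ t ^ p ≠ 0 := (Real.rpow_pos_of_pos hψt p).ne'
    have h4 : u t ^ p ≠ 0 := (Real.rpow_pos_of_pos hut p).ne'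
    field_simp
    ring
  set L : ℝ := (p - 1) * ((d:ℝ) - 2) ^ (-p) with hLdef
  have hL : 0 < L := mul_pos (by linarith) (Real.rpow_pos_of_pos hc _)
  have hadd : Filter.Tendsto (fun t => u' t / u t + ((d:ℝ) - 2)) Filter.atTop
      (nhds ((d:ℝ)-2)) := by
    have h1 := hrat.add_const ((d:ℝ)-2)
    simpa using h1
  have hg0 : Filter.Tendsto g Filter.atTop (nhds L) := by
    have h2 : ContinuousAt (fun x : ℝ => x ^ (-p)) ((d:ℝ)-2) :=
      Real.continuousAt_rpow_const _ _ (Or.inl hc.ne')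
    have h3 := (h2.tendsto.comp hadd).const_mul (p-1)
    exact h3
  have hFt : Filter.Tendsto (fun t => F t / t) Filter.atTop (nhds L) :=
    tendsto_div_id_of_hasDerivAt hF' hg0
  have hcont2 : ContinuousAt (fun x : ℝ => x ^ (-α)) L :=
    Real.continuousAt_rpow_const _ _ (Or.inl hL.ne')
  have hstep : Filter.Tendsto (fun t => t ^ α * ψ t) Filter.atTop (nhds (L ^ (-α))) := by
    have h4 := hcont2.tendsto.comp hFt
    apply Filter.Tendsto.congr' _ h4
    filter_upwards [eventually_gt_atTop (0:ℝ)] with t ht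
    have hψt := hψpos t ht
    simp only [Function.comp]
    rw [hFdef]
    simp only
    rw [Real.div_rpow (Real.rpow_nonneg hψt.le _) ht.le]
    rw [← Real.rpow_mul hψt.le]
    rw [show (1 - p) * (-α) = (1:ℝ) by linear_combination hpα]
    rw [Real.rpow_one, Real.rpow_neg ht.le]
    rw [div_inv_eq_mul, mul_comm]
  have hfinal : Filter.Tendsto (fun t => t ^ α * u t) Filter.atTop
      (nhds (L ^ (-α) / ((d:ℝ)-2))) := by
    have h5 := hstep.div hadd hc.ne'
    apply Filter.Tendsto.congr' _ h5
    filter_upwards [eventually_gt_atTop (0:ℝ)] with t ht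
    have hψt := (hψpos t ht).ne'
    have hut := (hpos t ht).ne'
    show t ^ α * ψ t / (u' t / u t + ((d:ℝ) - 2)) = t ^ α * u t
    rw [← hψu t ht]
    field_simp
  have hconst : L ^ (-α) / ((d:ℝ) - 2) = (((d:ℝ)-2)^2/(2+γ)) ^ α := by
    have hq2 : (0:ℝ) < p - 1 := by linarith
    rw [hLdef, Real.mul_rpow hq2.le (Real.rpow_pos_of_pos hc (-p)).le]
    rw [← Real.rpow_mul hc.le]
    rw [show (-p) * (-α) = α + 1 by linear_combination hpα]
    rw [Real.rpow_add hc, Real.rpow_one]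
    rw [show (((d:ℝ)-2)^2/(2+γ)) = ((d:ℝ)-2)/(p-1) by rw [hq]; field_simp]
    rw [Real.div_rpow hc.le hq2.le, Real.rpow_neg hq2.le]
    have h6 : (p-1:ℝ) ^ α ≠ 0 := (Real.rpow_pos_of_pos hq2 α).ne'
    field_simp
  rw [← hconst] at *
  exact hfinal
end

section
/- Let $d \ge 3$, $\gamma > -2$, and let $\mathfrak{u}$ be a positive $C^2$ solution on $(0,\infty)$ of $(\mathfrak{u}' + (d-2)\mathfrak{u})' + \mathfrak{u}^{\frac{d+\gamma}{d-2}} = 0$ with $-(d-2) < \mathfrak{u}'/\mathfrak{u} < 0$ everywhere. Set $\mathfrak{w}(\rho) = \mathfrak{u}'(\mathfrak{u}^{-1}(\rho))/\rho$ for $\rho$ in the range of $\mathfrak{u}$ (which is a $C^1$-diffeomorphism onto its image). Then $\mathfrak{w}$ satisfies $\mathfrak{w}'(\rho) = -\frac{\mathfrak{w}(\rho)^2 + (d-2)\mathfrak{w}(\rho) + \rho^{\frac{\gamma+2}{d-2}}}{\rho\, \mathfrak{w}(\rho)}$, and at any $a$ in the range with $\mathfrak{w}'(a) = 0$ one has $\mathfrak{w}''(a)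 > 0$. Consequently $\mathfrak{w}$ is monotone near $\rho = 0^+$ and $\lim_{\rho \to 0^+} \mathfrak{w}(\rho)$ exists in $[-(d-2), 0]$. -/
open MeasureTheory Set Filter ENNReal

open Topology in
/-- the phase-plane function `𝔴(ρ) = u'(u⁻¹(ρ))/ρ`: its ODE, the sign of `𝔴''`
at critical points, eventual monotonicity near `ρ = 0⁺` and existence of the limit. -/
theorem stmt16 (d : ℕ) (hd : 3 ≤ d) (γ : ℝ) (hγ : -2 < γ)
    (u u' u'' : ℝ → ℝ) (w : ℝ → ℝ)
    (hpos : ∀ t ∈ Set.Ioi (0:ℝ), 0 < u t)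
    (hu' : ∀ t ∈ Set.Ioi (0:ℝ), HasDerivAt u (u' t) t)
    (hu'' : ∀ t ∈ Set.Ioi (0:ℝ), HasDerivAt u' (u'' t) t)
    (hode : ∀ t ∈ Set.Ioi (0:ℝ),
      u'' t + ((d:ℝ) - 2) * u' t + u t ^ (((d:ℝ) + γ)/((d:ℝ) - 2)) = 0)
    (hbound : ∀ t ∈ Set.Ioi (0:ℝ),
      -((d:ℝ) - 2) < u' t / u t ∧ u' t / u t < 0)
    (hw : ∀ t ∈ Set.Ioi (0:ℝ), w (u t) = u' t / u t) :
    (∀ t ∈ Set.Ioi (0:ℝ),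
      HasDerivAt w
        (-((w (u t)) ^ 2 + ((d:ℝ) - 2) * w (u t) + (u t) ^ ((γ + 2)/((d:ℝ) - 2)))
          / (u t * w (u t))) (u t)) ∧
    (∀ t ∈ Set.Ioi (0:ℝ), deriv w (u t) = 0 → 0 < deriv (deriv w) (u t)) ∧
    (∃ ρ₀ > (0:ℝ),
      MonotoneOn w (u '' Set.Ioi 0 ∩ Set.Ioo 0 ρ₀)
      ∨ AntitoneOn w (u '' Set.Ioi 0 ∩ Set.Ioo 0 ρ₀)) ∧
    (∃ m ∈ Set.Icc (-((d:ℝ) - 2)) (0:ℝ),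
      Filter.Tendsto w (nhdsWithin 0 (u '' Set.Ioi 0)) (nhds m)) := by
  have hd2 : (0:ℝ) < (d:ℝ) - 2 := by
    have : (3:ℝ) ≤ (d:ℝ) := by exact_mod_cast hd
    linarith
  set E : ℝ := (γ + 2)/((d:ℝ) - 2) with hEdef
  have hE : 0 < E := div_pos (by linarith) hd2
  set I : Set ℝ := u '' Set.Ioi 0 with hIdef
  set F : ℝ → ℝ := fun ρ => -((w ρ) ^ 2 + ((d:ℝ) - 2) * w ρ + ρ ^ E) / (ρ * w ρ) with hFdef
  have hu'neg : ∀ t ∈ Set.Ioi (0:ℝ), u' t < 0 := by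
    intro t ht
    have h2 := (hbound t ht).2
    rcases div_neg_iff.mp h2 with ⟨h, h'⟩ | ⟨h, h'⟩
    · exact absurd (hpos t ht) (not_lt.mpr h'.le)
    · exact h
  have hstrict : ∀ t ∈ Set.Ioi (0:ℝ), HasStrictDerivAt u (u' t) t := by
    intro t ht
    refine hasStrictDerivAt_of_hasDerivAt_of_continuousAt ?_ (hu'' t ht).continuousAt
    filter_upwards [isOpen_Ioi.mem_nhds ht] with y hy using hu' y hy
  -- local inverse
  have hloc : ∀ t ∈ Set.Ioi (0:ℝ), ∃ g : ℝ → ℝ, g (u t) = t ∧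
      (∀ᶠ ρ in 𝓝 (u t), g ρ ∈ Set.Ioi (0:ℝ) ∧ u (g ρ) = ρ) ∧
      HasDerivAt g (u' t)⁻¹ (u t) := by
    intro t ht
    have hs := hstrict t ht
    have hne : u' t ≠ 0 := (hu'neg t ht).ne
    refine ⟨hs.localInverse u (u' t) t hne, ?_, ?_, (hs.to_localInverse hne).hasDerivAt⟩
    · exact (hs.hasStrictFDerivAt_equiv hne).localInverse_apply_image
    · have hcont := (hs.hasStrictFDerivAt_equiv hne).localInverse_continuousAt
      have hgt : (hs.localInverse u (u' t) t hne) (u t) = t :=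
        (hs.hasStrictFDerivAt_equiv hne).localInverse_apply_image
      have hmem : Set.Ioi (0:ℝ) ∈ 𝓝 ((hs.localInverse u (u' t) t hne) (u t)) := by
        rw [hgt]; exact isOpen_Ioi.mem_nhds ht
      filter_upwards [hcont.preimage_mem_nhds hmem,
        (hs.hasStrictFDerivAt_equiv hne).eventually_right_inverse] with ρ h1 h2
      exact ⟨h1, h2⟩
  -- key: derivative of w on the image
  have hkey : ∀ t ∈ Set.Ioi (0:ℝ),
      (∀ᶠ ρ in 𝓝 (u t), ρ ∈ I) ∧ HasDerivAt w (F (u t)) (u t) := by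
    intro t ht
    obtain ⟨g, hgt, hev, hgd⟩ := hloc t ht
    have hmemI : ∀ᶠ ρ in 𝓝 (u t), ρ ∈ I := by
      filter_upwards [hev] with ρ ⟨h1, h2⟩ using ⟨g ρ, h1, h2⟩
    have hweq : w =ᶠ[𝓝 (u t)] fun ρ => u' (g ρ) / ρ := by
      filter_upwards [hev] with ρ ⟨h1, h2⟩
      calc w ρ = w (u (g ρ)) := by rw [h2]
        _ = u' (g ρ) / u (g ρ) := hw _ h1
        _ = u' (g ρ) / ρ := by rw [h2]
    have hu't : HasDerivAt u' (u'' t) (g (u t)) := by rw [hgt]; exact hu'' t ht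
    have hcompd : HasDerivAt (fun ρ => u' (g ρ)) (u'' t * (u' t)⁻¹) (u t) :=
      HasDerivAt.comp (u t) hu't hgd
    have hune : u t ≠ 0 := (hpos t ht).ne'
    have hdiv : HasDerivAt (fun ρ => u' (g ρ) / ρ)
        ((u'' t * (u' t)⁻¹ * u t - u' (g (u t)) * 1) / (u t) ^ 2) (u t) :=
      hcompd.div (hasDerivAt_id (u t)) hune
    rw [hgt] at hdiv
    have hval : (u'' t * (u' t)⁻¹ * u t - u' t * 1) / (u t) ^ 2 = F (u t) := by
      have hupos := hpos t ht
      have hu'ne : u' t ≠ 0 := (hu'neg t ht).ne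
      have hpow : u t ^ (((d:ℝ) + γ)/((d:ℝ) - 2)) = u t ^ E * u t := by
        have h1 : ((d:ℝ) + γ)/((d:ℝ) - 2) = E + 1 := by
          rw [hEdef]; field_simp; ring
        rw [h1, Real.rpow_add hupos, Real.rpow_one]
      have hode' : u'' t = -(((d:ℝ) - 2) * u' t) - u t ^ E * u t := by
        have := hode t ht; rw [hpow] at this; linarith
      rw [hFdef]
      simp only
      rw [hw t ht, hode']
      field_simp
      ring
    rw [hval] at hdiv
    exact ⟨hmemI, hdiv.congr_of_eventuallyEq hweq⟩
  have hWd : ∀ a ∈ I, HasDerivAt w (F a) a := by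
    rintro a ⟨t, ht, rfl⟩; exact (hkey t ht).2
  have hInbhd : ∀ a ∈ I, I ∈ 𝓝 a := by
    rintro a ⟨t, ht, rfl⟩
    exact eventually_mem_set.mp (hkey t ht).1
  have hIopen : IsOpen I := isOpen_iff_mem_nhds.mpr hInbhd
  have hapos : ∀ a ∈ I, (0:ℝ) < a := by rintro a ⟨t, ht, rfl⟩; exact hpos t ht
  have hwmem : ∀ a ∈ I, -((d:ℝ) - 2) < w a ∧ w a < 0 := by
    rintro a ⟨t, ht, rfl⟩; rw [hw t ht]; exact hbound t ht
  have hderiv_eq : ∀ a ∈ I, deriv w a = F a := fun a ha => (hWd a ha).deriv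
  have hdd : ∀ a ∈ I, deriv w a = 0 →
      HasDerivAt (deriv w) (-(E * a ^ (E - 1)) / (a * w a)) a ∧
      0 < -(E * a ^ (E - 1)) / (a * w a) := by
    intro a ha h0
    have ha0 : 0 < a := hapos a ha
    have hwa : w a < 0 := (hwmem a ha).2
    have hDne : a * w a ≠ 0 := mul_ne_zero ha0.ne' hwa.ne
    have hFa : F a = 0 := by rw [← hderiv_eq a ha]; exact h0
    have hNa : (w a) ^ 2 + ((d:ℝ) - 2) * w a + a ^ E = 0 := by
      have := hFa
      rw [hFdef] at this
      simp only at this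
      rcases div_eq_zero_iff.mp this with h | h
      · linarith [neg_eq_zero.mp h]
      · exact absurd h hDne
    have hw0 : HasDerivAt w 0 a := by rw [← h0, hderiv_eq a ha]; exact hWd a ha
    have hrpow : HasDerivAt (fun ρ : ℝ => ρ ^ E) (E * a ^ (E - 1)) a :=
      Real.hasDerivAt_rpow_const (Or.inl ha0.ne')
    have hD : HasDerivAt (fun ρ => ρ * w ρ) (1 * w a + a * 0) a :=
      (hasDerivAt_id a).mul hw0
    have hF : HasDerivAt F (-(E * a ^ (E - 1)) / (a * w a)) a := by
      have hN := ((hw0.pow 2).add ((hasDerivAt_const a ((d:ℝ) - 2)).mul hw0)).add hrpow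
      have hF0 := (hN.neg).div hD hDne
      convert hF0 using 1
      · rfl
      · rfl
      · rfl
      simp only [Pi.neg_apply, Pi.add_apply, Pi.pow_apply, Pi.mul_apply]
      rw [hNa]
      field_simp [hwa.ne, ha0.ne']
      ring
    have hev : deriv w =ᶠ[𝓝 a] F := by
      filter_upwards [hInbhd a ha] with ρ hρ using hderiv_eq ρ hρ
    refine ⟨hF.congr_of_eventuallyEq hev, ?_⟩
    have hnum : -(E * a ^ (E - 1)) < 0 := by
      have := Real.rpow_pos_of_pos ha0 (E - 1)
      nlinarith
    have hden : a * w a < 0 := mul_neg_of_pos_of_neg ha0 hwa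
    exact div_pos_of_neg_of_neg hnum hden
  -- strict local minimum at critical points
  have hwcont : ∀ a ∈ I, ContinuousAt w a := fun a ha => (hWd a ha).continuousAt
  have hmin : ∀ a ∈ I, deriv w a = 0 → ∃ δ > (0:ℝ),
      (∀ x, a < x → x < a + δ → w a < w x) ∧ (∀ x, a - δ < x → x < a → w a < w x) := by
    intro a ha h0
    obtain ⟨hda, hv⟩ := hdd a ha h0
    have hslope : ∀ᶠ x in 𝓝[≠] a, 0 < slope (deriv w) a x :=
      (hasDerivAt_iff_tendsto_slope.mp hda).eventually (eventually_gt_nhds hv)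
    have hball : ∀ᶠ x in 𝓝 a, x ∈ I := hInbhd a ha
    rw [eventually_nhdsWithin_iff] at hslope
    obtain ⟨ε, hε, hb⟩ := Metric.eventually_nhds_iff.mp (hslope.and hball)
    set δ := ε / 2 with hδdef
    have hδ : 0 < δ := half_pos hε
    have hsub : Set.Icc (a - δ) (a + δ) ⊆ I := by
      intro x hx
      have : dist x a < ε := by
        rw [Real.dist_eq, abs_lt]
        constructor <;> [linarith [hx.1]; linarith [hx.2]]
      exact (hb this).2
    have hdw : ∀ x, x ≠ a → dist x a < ε → deriv w x / (x - a) > 0 := by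
      intro x hx hd
      have := (hb hd).1 hx
      rwa [slope_def_field, h0, sub_zero] at this
      
    have hmono1 : StrictMonoOn w (Set.Icc a (a + δ)) := by
      refine strictMonoOn_of_deriv_pos (convex_Icc _ _) ?_ ?_
      · intro x hx
        exact (hwcont x (hsub ⟨by linarith [hx.1, hδ], hx.2⟩)).continuousWithinAt
      · intro x hx
        rw [interior_Icc] at hx
        have hxa : x ≠ a := (hx.1).ne'
        have hdx : dist x a < ε := by
          rw [Real.dist_eq, abs_lt]; constructor <;> [linarith [hx.1]; linarith [hx.2]]
        have := hdw x hxa hdx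
        have hpos' : 0 < x - a := by linarith [hx.1]
        exact (div_pos_iff.mp this).elim (fun h => h.1)
          (fun h => absurd hpos' (not_lt.mpr h.2.le))
    have hanti1 : StrictAntiOn w (Set.Icc (a - δ) a) := by
      refine strictAntiOn_of_deriv_neg (convex_Icc _ _) ?_ ?_
      · intro x hx
        exact (hwcont x (hsub ⟨hx.1, by linarith [hx.2, hδ]⟩)).continuousWithinAt
      · intro x hx
        rw [interior_Icc] at hx
        have hxa : x ≠ a := (hx.2).ne
        have hdx : dist x a < ε := by
          rw [Real.dist_eq, abs_lt]; constructor <;> [linarith [hx.1]; linarith [hx.2]]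
        have := hdw x hxa hdx
        have hneg' : x - a < 0 := by linarith [hx.2]
        rcases div_pos_iff.mp this with h | h
        · exact absurd hneg' (not_lt.mpr h.2.le)
        · exact h.1
    refine ⟨δ, hδ, fun x h1 h2 => ?_, fun x h1 h2 => ?_⟩
    · exact hmono1 ⟨le_refl a, by linarith [hδ]⟩ ⟨h1.le, h2.le⟩ h1
    · exact hanti1 ⟨h1.le, h2.le⟩ ⟨by linarith [hδ], le_refl a⟩ h2
  have hIordconn : OrdConnected I := by
    refine IsPreconnected.ordConnected ?_
    exact isPreconnected_Ioi.image u
      (fun t ht => (hu' t ht).continuousAt.continuousWithinAt)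
  -- at most one critical point
  have hkey2 : ∀ a ∈ I, ∀ b ∈ I, deriv w a = 0 → deriv w b = 0 → a < b → False := by
    intro a ha b hb h0a h0b hab
    have hIcc : Set.Icc a b ⊆ I := hIordconn.out ha hb
    obtain ⟨c, hc, hmax⟩ := isCompact_Icc.exists_isMaxOn (Set.nonempty_Icc.mpr hab.le)
      (fun x hx => (hwcont x (hIcc hx)).continuousWithinAt)
    rcases eq_or_lt_of_le hc.2 with rfl | hcb
    · obtain ⟨δ, hδ, _, hleft⟩ := hmin c hb h0b
      set x := max (c - δ/2) ((a + c)/2) with hx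
      have hax : a < x := lt_max_of_lt_right (by linarith)
      have hxc : x < c := max_lt (by linarith) (by linarith)
      have hcd : c - δ < x := lt_of_lt_of_le (by linarith) (le_max_left _ _)
      exact absurd (hmax ⟨hax.le, hxc.le⟩) (not_le.mpr (hleft x hcd hxc))
    · have hc0 : deriv w c = 0 := by
        rcases eq_or_lt_of_le hc.1 with rfl | hac
        · exact h0a
        · exact ((hmax.isLocalMax (Icc_mem_nhds hac hcb)).deriv_eq_zero)
      obtain ⟨δ, hδ, hright, _⟩ := hmin c (hIcc hc) hc0
      set x := min (c + δ/2) ((c + b)/2) with hx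
      have hcx : c < x := lt_min (by linarith) (by linarith)
      have hxb : x < b := min_lt_of_right_lt (by linarith)
      have hxd : x < c + δ := lt_of_le_of_lt (min_le_left _ _) (by linarith)
      exact absurd (hmax ⟨(hc.1.trans hcx.le), hxb.le⟩)
        (not_le.mpr (hright x hcx hxd))
  have hunique : ∀ a ∈ I, ∀ b ∈ I, deriv w a = 0 → deriv w b = 0 → a = b := by
    intro a ha b hb h0a h0b
    rcases lt_trichotomy a b with h | h | h
    · exact absurd (hkey2 a ha b hb h0a h0b h) not_false
    · exact h
    · exact absurd (hkey2 b hb a ha h0b h0a h) not_false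
  -- continuity of F on I
  have hFcont : ContinuousOn F I := by
    intro a ha
    have h1 : ContinuousAt w a := hwcont a ha
    have h2 : ContinuousAt (fun ρ : ℝ => ρ ^ E) a :=
      Real.continuousAt_rpow_const a E (Or.inl (hapos a ha).ne')
    exact ContinuousAt.continuousWithinAt
      ((((h1.pow 2).add (continuousAt_const.mul h1)).add h2).neg.div
        (continuousAt_id.mul h1) (mul_ne_zero (hapos a ha).ne' (hwmem a ha).2.ne))
  -- the monotonicity statement
  have hmono : ∃ ρ₀ > (0:ℝ), MonotoneOn w (I ∩ Set.Ioo 0 ρ₀)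
      ∨ AntitoneOn w (I ∩ Set.Ioo 0 ρ₀) := by
    obtain ⟨ρ₀, hρ₀, hnocrit⟩ : ∃ ρ₀ > (0:ℝ), ∀ x ∈ I ∩ Set.Ioo 0 ρ₀, deriv w x ≠ 0 := by
      by_cases hex : ∃ a ∈ I, deriv w a = 0
      · obtain ⟨a, ha, h0⟩ := hex
        exact ⟨a, hapos a ha, fun x hx hx0 =>
          absurd (hunique x hx.1 a ha hx0 h0) (ne_of_lt hx.2.2)⟩
      · push_neg at hex; exact ⟨1, one_pos, fun x hx => hex x hx.1⟩
    set J := I ∩ Set.Ioo 0 ρ₀ with hJdef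
    have hJI : J ⊆ I := Set.inter_subset_left
    have hJord : OrdConnected J := hIordconn.inter Set.ordConnected_Ioo
    have hJconv : Convex ℝ J := convex_iff_ordConnected.mpr hJord
    have hJopen : IsOpen J := hIopen.inter isOpen_Ioo
    have hJcont : ContinuousOn w J := fun x hx => (hwcont x (hJI hx)).continuousWithinAt
    have hsame : ∀ x ∈ J, ∀ y ∈ J, deriv w x < 0 → 0 < deriv w y → False := by
      intro x hx y hy hx0 hy0
      have hzero : ∀ z ∈ J, F z = 0 → False := fun z hz hz0 =>
        hnocrit z hz (by rw [hderiv_eq z (hJI hz)]; exact hz0)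
      rcases lt_trichotomy x y with h | h | h
      · have hIcc : Set.Icc x y ⊆ J := hJord.out hx hy
        have h0m : (0:ℝ) ∈ Set.Icc (F x) (F y) :=
          ⟨by rw [← hderiv_eq x (hJI hx)]; exact hx0.le,
           by rw [← hderiv_eq y (hJI hy)]; exact hy0.le⟩
        obtain ⟨z, hz, hz0⟩ := intermediate_value_Icc h.le
          (hFcont.mono (hIcc.trans hJI)) h0m
        exact hzero z (hIcc hz) hz0
      · rw [h] at hx0; linarith
      · have hIcc : Set.Icc y x ⊆ J := hJord.out hy hx
        have h0m : (0:ℝ) ∈ Set.Icc (F x) (F y) :=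
          ⟨by rw [← hderiv_eq x (hJI hx)]; exact hx0.le,
           by rw [← hderiv_eq y (hJI hy)]; exact hy0.le⟩
        obtain ⟨z, hz, hz0⟩ := intermediate_value_Icc' h.le
          (hFcont.mono (hIcc.trans hJI)) h0m
        exact hzero z (hIcc hz) hz0
    refine ⟨ρ₀, hρ₀, ?_⟩
    by_cases hallpos : ∀ x ∈ J, 0 < deriv w x
    · left
      exact (strictMonoOn_of_deriv_pos hJconv hJcont
        (by rw [hJopen.interior_eq]; exact hallpos)).monotoneOn
    · right
      push_neg at hallpos
      obtain ⟨x, hx, hx0⟩ := hallpos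
      have hx0' : deriv w x < 0 := lt_of_le_of_ne hx0 (hnocrit x hx)
      have hallneg : ∀ y ∈ J, deriv w y < 0 := by
        intro y hy
        rcases lt_trichotomy (deriv w y) 0 with h | h | h
        · exact h
        · exact absurd h (hnocrit y hy)
        · exact absurd (hsame x hx y hy hx0' h) not_false
      exact (strictAntiOn_of_deriv_neg hJconv hJcont
        (by rw [hJopen.interior_eq]; exact hallneg)).antitoneOn
  obtain ⟨ρ₀, hρ₀, hMA⟩ := hmono
  have hIsub : I ⊆ Set.Ioi (0:ℝ) := by rintro a ⟨t, ht, rfl⟩; exact hpos t ht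
  refine ⟨fun t ht => hWd (u t) ⟨t, ht, rfl⟩, fun t ht h0 => ?_, ⟨ρ₀, hρ₀, hMA⟩, ?_⟩
  · obtain ⟨hda, hv⟩ := hdd (u t) ⟨t, ht, rfl⟩ h0
    rw [hda.deriv]; exact hv
  · by_cases h0c : (0:ℝ) ∈ closure I
    · have hxex : ∀ ε > (0:ℝ), ∃ z ∈ I, z < ε := by
        intro ε hε
        obtain ⟨z, hz1, hz2⟩ := Metric.mem_closure_iff.mp h0c ε hε
        refine ⟨z, hz1, ?_⟩
        have hz0 : 0 < z := hIsub hz1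
        rw [Real.dist_eq, zero_sub, abs_neg, abs_of_pos hz0] at hz2
        exact hz2
      obtain ⟨x, hxI, hxρ⟩ := hxex ρ₀ hρ₀
      have hx0 : 0 < x := hIsub hxI
      have hIoosub : Set.Ioo 0 x ⊆ I := by
        intro y hy
        obtain ⟨z, hzI, hzy⟩ := hxex y hy.1
        exact hIordconn.out hzI hxI ⟨hzy.le, hy.2.le⟩
      have hsubJ : Set.Ioo 0 x ⊆ I ∩ Set.Ioo 0 ρ₀ :=
        fun y hy => ⟨hIoosub hy, hy.1, hy.2.trans hxρ⟩
      have hne : (Set.Ioo (0:ℝ) x).Nonempty := Set.nonempty_Ioo.mpr hx0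
      have hbb : BddBelow (w '' Set.Ioo 0 x) := by
        refine ⟨-((d:ℝ) - 2), ?_⟩
        rintro b ⟨ρ, hρ, rfl⟩
        exact (hwmem ρ (hIoosub hρ)).1.le
      have hba : BddAbove (w '' Set.Ioo 0 x) := by
        refine ⟨0, ?_⟩
        rintro b ⟨ρ, hρ, rfl⟩
        exact (hwmem ρ (hIoosub hρ)).2.le
      have hhalf : x/2 ∈ Set.Ioo (0:ℝ) x := ⟨by linarith, by linarith⟩
      have hmemim : w (x/2) ∈ w '' Set.Ioo 0 x := ⟨x/2, hhalf, rfl⟩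
      rcases hMA with hM | hA
      · refine ⟨sInf (w '' Set.Ioo 0 x), ⟨?_, ?_⟩, ?_⟩
        · refine le_csInf (hne.image w) ?_
          rintro b ⟨ρ, hρ, rfl⟩
          exact (hwmem ρ (hIoosub hρ)).1.le
        · exact (csInf_le hbb hmemim).trans (hwmem _ (hIoosub hhalf)).2.le
        · exact (MonotoneOn.tendsto_nhdsWithin_Ioo_right hne (hM.mono hsubJ)
            hbb).mono_left (nhdsWithin_mono 0 hIsub)
      · refine ⟨sSup (w '' Set.Ioo 0 x), ⟨?_, ?_⟩, ?_⟩
        · exact (hwmem _ (hIoosub hhalf)).1.le.trans (le_csSup hba hmemim)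
        · refine csSup_le (hne.image w) ?_
          rintro b ⟨ρ, hρ, rfl⟩
          exact (hwmem ρ (hIoosub hρ)).2.le
        · exact (AntitoneOn.tendsto_nhdsWithin_Ioo_right hne (hA.mono hsubJ)
            hba).mono_left (nhdsWithin_mono 0 hIsub)
    · refine ⟨0, ⟨by linarith, le_refl 0⟩, ?_⟩
      have hbot : 𝓝[I] (0:ℝ) = ⊥ := by
        by_contra hne
        exact h0c (mem_closure_iff_nhdsWithin_neBot.mpr ⟨hne⟩)
      rw [show nhdsWithin (0:ℝ) (u '' Set.Ioi 0) = 𝓝[I] (0:ℝ) from rfl, hbot]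
      exact tendsto_bot
end
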